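/- arXiv:math/0009234 — 7 statements merged into one kernel-verified Lean document; each statement's English description precedes it below -/
import Mathlib

section
/- Let R be a ring and let f : C → D be a chain map of nonnegatively graded chain complexes of R-modules such that C_0 is a projective R-module and the induced map H_0(f) : H_0(C) → H_0(D) is bijective. Suppose g_0 : D_0 → C_0 and s : D_0 → D_1 are R-linear maps satisfying f_0 ∘ g_0 + d ∘ s = id_{D_0}. Then there exists an R-linear map t : C_0 → C_1 such that g_0 ∘ f_0 + d ∘ t = id_{C_0}. -/
open CategoryTheory

/-- Identity (2) in the proof of the 1-skeleton alignment lemma: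
if `C₀` is projective, `H₀(f)` is bijective, and `f₀ ∘ g₀ + d ∘ s = id`, then
there is `t : C₀ → C₁` with `g₀ ∘ f₀ + d ∘ t = id`. -/
theorem statement1 {R : Type*} [Ring R]
    (C D : ChainComplex (ModuleCat R) ℕ) (f : C ⟶ D)
    (hproj : Module.Projective R (C.X 0))
    (hbij : Function.Bijective (HomologicalComplex.homologyMap f 0))
    (g₀ : D.X 0 ⟶ C.X 0) (s : D.X 0 ⟶ D.X 1)
    (h1 : g₀ ≫ f.f 0 + s ≫ D.d 1 0 = 𝟙 (D.X 0)) :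
    ∃ t : C.X 0 ⟶ C.X 1, f.f 0 ≫ g₀ + t ≫ C.d 1 0 = 𝟙 (C.X 0) := by
  classical
  haveI := hproj
  have hprevC : (ComplexShape.down ℕ).prev 0 = 1 := ChainComplex.prev ℕ 0
  -- key injectivity consequence of bijectivity of H₀(f)
  have hinj : ∀ x : C.X 0, (∃ y : D.X 1, D.d 1 0 y = f.f 0 x) →
      ∃ z : C.X 1, C.d 1 0 z = x := by
    intro x ⟨y, hy⟩
    have hgC : (C.sc 0).g = 0 := C.shape 0 _ (by simp)
    have hxker : x ∈ LinearMap.ker (C.sc 0).g.hom := by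
      rw [hgC]; trivial
    let kx : LinearMap.ker (C.sc 0).g.hom := ⟨x, hxker⟩
    let cx : C.cycles 0 := (C.sc 0).moduleCatCyclesIso.inv kx
    have hix : C.iCycles 0 cx = x := (C.sc 0).moduleCatCyclesIso_inv_iCycles_apply kx
    let w : LinearMap.ker (D.sc 0).g.hom :=
      (D.sc 0).moduleCatCyclesIso.hom (HomologicalComplex.cyclesMap f 0 cx)
    have hwval : w.1 = f.f 0 x := by
      have h₁ : w.1 = (D.sc 0).iCycles (HomologicalComplex.cyclesMap f 0 cx) :=
        (D.sc 0).moduleCatCyclesIso_hom_i_apply _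
      have h₂ : (D.sc 0).iCycles (HomologicalComplex.cyclesMap f 0 cx)
          = f.f 0 (C.iCycles 0 cx) :=
        congrArg (fun m => m cx) (HomologicalComplex.cyclesMap_i f 0)
      exact h₁.trans (h₂.trans (by rw [hix]))
    have hwbd : w ∈ LinearMap.range (D.sc 0).moduleCatToCycles := by
      refine ⟨(D.XIsoOfEq hprevC.symm).hom y, Subtype.ext ?_⟩
      have h₃ : D.d ((ComplexShape.down ℕ).prev 0) 0 ((D.XIsoOfEq hprevC.symm).hom y)
          = D.d 1 0 y :=
        congrArg (fun m => m y) (D.XIsoOfEq_hom_comp_d hprevC.symm 0)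
      exact h₃.trans (hy.trans hwval.symm)
    have hπw : (D.sc 0).moduleCatLeftHomologyData.π w = 0 :=
      (Submodule.Quotient.mk_eq_zero _).2 hwbd
    have hD0 : D.homologyπ 0 (HomologicalComplex.cyclesMap f 0 cx) = 0 := by
      have h₄ : HomologicalComplex.cyclesMap f 0 cx = (D.sc 0).moduleCatCyclesIso.inv w :=
        ((D.sc 0).moduleCatCyclesIso.hom_inv_id_apply _).symm
      have h₅ := (D.sc 0).moduleCatCyclesIso_inv_π_apply w
      have h₆ : (D.sc 0).moduleCatHomologyIso.inv ((D.sc 0).moduleCatLeftHomologyData.π w) = 0 := by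
        rw [hπw, map_zero]
      rw [h₄]
      exact h₅.trans h₆
    have hC0 : C.homologyπ 0 cx = 0 := by
      apply hbij.injective
      have hnat : HomologicalComplex.homologyMap f 0 (C.homologyπ 0 cx)
          = D.homologyπ 0 (HomologicalComplex.cyclesMap f 0 cx) :=
        congrArg (fun m => m cx) (HomologicalComplex.homologyπ_naturality f 0)
      rw [map_zero]
      exact hnat.trans hD0
    have hπkx : (C.sc 0).moduleCatLeftHomologyData.π kx = 0 := by
      have h₇ : (C.sc 0).moduleCatCyclesIso.hom cx = kx :=
        (C.sc 0).moduleCatCyclesIso.inv_hom_id_apply _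
      have h₈ := (C.sc 0).π_moduleCatCyclesIso_hom_apply cx
      have h₉ : (C.sc 0).moduleCatHomologyIso.hom ((C.sc 0).homologyπ cx) = 0 := by
        have : (C.sc 0).homologyπ cx = 0 := hC0
        rw [this, map_zero]
      calc (C.sc 0).moduleCatLeftHomologyData.π kx
          = (C.sc 0).moduleCatLeftHomologyData.π ((C.sc 0).moduleCatCyclesIso.hom cx) :=
            (congrArg (⇑(C.sc 0).moduleCatLeftHomologyData.π) h₇).symm
        _ = (C.sc 0).moduleCatHomologyIso.hom ((C.sc 0).homologyπ cx) := h₈.symm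
        _ = 0 := h₉
    have hmem : kx ∈ LinearMap.range (C.sc 0).moduleCatToCycles :=
      (Submodule.Quotient.mk_eq_zero _).1 hπkx
    obtain ⟨a, ha⟩ := hmem
    refine ⟨(C.XIsoOfEq hprevC).hom a, ?_⟩
    have h₁₀ : C.d 1 0 ((C.XIsoOfEq hprevC).hom a)
        = C.d ((ComplexShape.down ℕ).prev 0) 0 a :=
      congrArg (fun m => m a) (C.XIsoOfEq_hom_comp_d hprevC 0)
    have h₁₁ : (C.sc 0).f a = x := congrArg Subtype.val ha
    exact h₁₀.trans h₁₁
  -- construct t by projectivity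
  have hmem : ∀ x : C.X 0, x - g₀ (f.f 0 x) ∈
      LinearMap.range (C.d 1 0).hom := by
    intro x
    apply hinj
    refine ⟨s (f.f 0 x), ?_⟩
    have h5 : (g₀ ≫ f.f 0 + s ≫ D.d 1 0) (f.f 0 x) = 𝟙 (D.X 0) (f.f 0 x) := by rw [h1]
    have h6 : f.f 0 (g₀ (f.f 0 x)) + D.d 1 0 (s (f.f 0 x)) = f.f 0 x := h5
    rw [map_sub, eq_sub_iff_add_eq, add_comm]
    exact h6
  let φ : C.X 0 →ₗ[R] ↥(LinearMap.range (C.d 1 0).hom) :=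
    LinearMap.codRestrict _ (LinearMap.id - LinearMap.comp g₀.hom
      (f.f 0).hom) hmem
  obtain ⟨t, ht⟩ := Module.projective_lifting_property
    (C.d 1 0).hom.rangeRestrict φ (LinearMap.surjective_rangeRestrict _)
  refine ⟨ModuleCat.ofHom t, ?_⟩
  ext x
  have h7 : C.d 1 0 (t x) = x - g₀ (f.f 0 x) :=
    congrArg Subtype.val (LinearMap.congr_fun ht x)
  show g₀ (f.f 0 x) + C.d 1 0 (t x) = x
  rw [h7]
  abel
end

section
/- Let R be a ring and let f : C → D be a chain map of nonnegatively graded chain complexes of R-modules such that C_0 and D_0 are projective R-modules, H_0(f) : H_0(C) → H_0(D) is bijective, and H_1(f) : H_1(C) → H_1(D) is surjective. Then there exist R-linear maps g_0 : D_0 → C_0, s : D_0 → D_1, t : C_0 → C_1, and u : C_0 → D_2 satisfying the three identities: f_0 ∘ g_0 + d ∘ s = id_{D_0}, g_0 ∘ f_0 + d ∘ t = id_{C_0}, and d ∘ u + f_1 ∘ t = s ∘ f_0. -/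
open CategoryTheory

section SCHelp
variable {R : Type*} [Ring R]

/-- The canonical (linear) map from concrete cycles to categorical homology. -/
noncomputable def hopi (S : ShortComplex (ModuleCat R)) :
    ModuleCat.of R (LinearMap.ker S.g.hom) ⟶ S.homology :=
  S.moduleCatCyclesIso.inv ≫ S.homologyπ

lemma hopi_surjective (S : ShortComplex (ModuleCat R)) :
    Function.Surjective (hopi S) := by
  have h1 : Function.Surjective S.homologyπ :=
    (ModuleCat.epi_iff_surjective _).1 inferInstance
  have h2 : Function.Surjective S.moduleCatCyclesIso.inv :=
    (ModuleCat.epi_iff_surjective _).1 inferInstance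
  exact h1.comp h2

lemma hopi_eq_zero_iff (S : ShortComplex (ModuleCat R)) (x : LinearMap.ker S.g.hom) :
    hopi S x = 0 ↔ ∃ w : S.X₁, S.f w = (x : S.X₂) := by
  have : hopi S x = S.moduleCatHomologyIso.inv (S.moduleCatLeftHomologyData.π x) := by
    show (S.moduleCatCyclesIso.inv ≫ S.homologyπ) x = _
    rw [S.moduleCatCyclesIso_inv_π]; rfl
  rw [this]
  constructor
  · intro h
    have hinj : Function.Injective S.moduleCatHomologyIso.inv :=
      (ModuleCat.mono_iff_injective _).1 inferInstance
    have : S.moduleCatLeftHomologyData.π x = 0 := by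
      apply hinj; rw [h, map_zero]
    have hx : x ∈ LinearMap.range S.moduleCatToCycles := by
      exact (Submodule.Quotient.mk_eq_zero _).1 this
    obtain ⟨w, hw⟩ := hx
    exact ⟨w, congrArg Subtype.val hw⟩
  · rintro ⟨w, hw⟩
    have hx : x ∈ LinearMap.range S.moduleCatToCycles :=
      ⟨w, Subtype.ext hw⟩
    have : S.moduleCatLeftHomologyData.π x = 0 := by
      exact (Submodule.Quotient.mk_eq_zero _).2 hx
    rw [this, map_zero]

lemma hopi_naturality {S T : ShortComplex (ModuleCat R)} (φ : S ⟶ T)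
    (x : LinearMap.ker S.g.hom) (hx : T.g (φ.τ₂ x) = 0) :
    ShortComplex.homologyMap φ (hopi S x) = hopi T ⟨φ.τ₂ x, hx⟩ := by
  have h1 := ShortComplex.homologyπ_naturality φ
  have h2 : ShortComplex.homologyMap φ (hopi S x) =
      T.homologyπ (ShortComplex.cyclesMap φ (S.moduleCatCyclesIso.inv x)) := by
    simp only [hopi, CategoryTheory.comp_apply, Function.comp_apply]
    exact congrArg (fun (g : S.cycles ⟶ T.homology) => g (S.moduleCatCyclesIso.inv x)) h1
  rw [h2]
  have h3 : ShortComplex.cyclesMap φ (S.moduleCatCyclesIso.inv x) =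
      T.moduleCatCyclesIso.inv ⟨φ.τ₂ x, hx⟩ := by
    have hinj : Function.Injective T.iCycles :=
      (ModuleCat.mono_iff_injective _).1 inferInstance
    apply hinj
    have e1 : T.iCycles (ShortComplex.cyclesMap φ (S.moduleCatCyclesIso.inv x)) =
        φ.τ₂ (S.iCycles (S.moduleCatCyclesIso.inv x)) :=
      congrArg (fun (g : S.cycles ⟶ T.X₂) => g (S.moduleCatCyclesIso.inv x))
        (ShortComplex.cyclesMap_i φ)
    have e2 : S.iCycles (S.moduleCatCyclesIso.inv x) = (x : S.X₂) := 
      congrArg (fun (g : ModuleCat.of R (LinearMap.ker S.g.hom) ⟶ S.X₂) => g x) S.moduleCatCyclesIso_inv_iCycles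
    have e3 : T.iCycles (T.moduleCatCyclesIso.inv ⟨φ.τ₂ x, hx⟩) = φ.τ₂ x := 
      congrArg (fun (g : ModuleCat.of R (LinearMap.ker T.g.hom) ⟶ T.X₂) => g ⟨φ.τ₂ x, hx⟩)
        T.moduleCatCyclesIso_inv_iCycles
    rw [e1, e2, e3]
  rw [h3]
  rfl

lemma sc_surj {S T : ShortComplex (ModuleCat R)} (φ : S ⟶ T)
    (h : Function.Surjective (ShortComplex.homologyMap φ))
    (y : T.X₂) (hy : T.g y = 0) :
    ∃ (x : S.X₂) (w : T.X₁), S.g x = 0 ∧ φ.τ₂ x = y + T.f w := by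
  obtain ⟨h', hh'⟩ := h (hopi T ⟨y, hy⟩)
  obtain ⟨x₀, hx⟩ := hopi_surjective S h'
  set x : LinearMap.ker S.g.hom := x₀ with hxdef
  have hgx : T.g (φ.τ₂ (x : S.X₂)) = 0 := by
    have hc := congrArg (fun (g : S.X₂ ⟶ T.X₃) => g (x : S.X₂)) φ.comm₂₃
    simp only [CategoryTheory.comp_apply, Function.comp_apply] at hc
    rw [hc, LinearMap.mem_ker.mp x.2, map_zero]
  have : hopi T ⟨φ.τ₂ (x : S.X₂), hgx⟩ = hopi T ⟨y, hy⟩ := by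
    rw [← hopi_naturality φ x hgx, hx, hh']
  have hz : hopi T (⟨φ.τ₂ (x : S.X₂), hgx⟩ - ⟨y, hy⟩) = 0 := by
    rw [map_sub, this, sub_self]
  rw [hopi_eq_zero_iff] at hz
  obtain ⟨w, hw⟩ := hz
  refine ⟨x, w, x.2, ?_⟩
  have : φ.τ₂ (x : S.X₂) - y = T.f w := hw.symm
  linear_combination (norm := abel) this

lemma sc_inj {S T : ShortComplex (ModuleCat R)} (φ : S ⟶ T)
    (h : Function.Injective (ShortComplex.homologyMap φ))
    (x : S.X₂) (hx : S.g x = 0) (hw : ∃ w : T.X₁, T.f w = φ.τ₂ x) :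
    ∃ v : S.X₁, S.f v = x := by
  have hgx : T.g (φ.τ₂ x) = 0 := by
    have hc := congrArg (fun (g : S.X₂ ⟶ T.X₃) => g x) φ.comm₂₃
    simp only [CategoryTheory.comp_apply, Function.comp_apply] at hc
    rw [hc, hx, map_zero]
  have h1 : hopi T ⟨φ.τ₂ x, hgx⟩ = 0 := (hopi_eq_zero_iff T _).2 hw
  have h2 : ShortComplex.homologyMap φ (hopi S ⟨x, hx⟩) = 0 := by
    rw [hopi_naturality φ ⟨x, hx⟩ hgx, h1]
  have h3 : hopi S ⟨x, hx⟩ = 0 := by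
    apply h
    rw [h2, map_zero]
  rw [hopi_eq_zero_iff] at h3
  exact h3

end SCHelp

section CxHelp
variable {R : Type*} [Ring R] {C D : ChainComplex (ModuleCat R) ℕ} (f : C ⟶ D)

lemma cx_conj (n i k : ℕ) (hi : (ComplexShape.down ℕ).prev n = i)
    (hk : (ComplexShape.down ℕ).next n = k) :
    ∃ (A : C.homology n ⟶ (C.sc' i n k).homology)
      (B : D.homology n ⟶ (D.sc' i n k).homology),
      Function.Bijective A ∧ Function.Bijective B ∧
      ∀ x, B (HomologicalComplex.homologyMap f n x) =
        ShortComplex.homologyMap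
          ((HomologicalComplex.shortComplexFunctor' (ModuleCat R)
            (ComplexShape.down ℕ) i n k).map f) (A x) := by
  set e := HomologicalComplex.natIsoSc' (ModuleCat R) (ComplexShape.down ℕ) i n k hi hk with he
  have hnat := e.hom.naturality f
  refine ⟨ShortComplex.homologyMap (e.hom.app C), ShortComplex.homologyMap (e.hom.app D),
    ?_, ?_, ?_⟩
  · have : IsIso (ShortComplex.homologyMap (e.hom.app C)) := by
      change IsIso ((ShortComplex.homologyFunctor (ModuleCat R)).map (e.hom.app C))
      infer_instance
    exact ConcreteCategory.bijective_of_isIso (ShortComplex.homologyMapIso (e.app C)).hom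
  · have : IsIso (ShortComplex.homologyMap (e.hom.app D)) := by
      change IsIso ((ShortComplex.homologyFunctor (ModuleCat R)).map (e.hom.app D))
      infer_instance
    exact ConcreteCategory.bijective_of_isIso (ShortComplex.homologyMapIso (e.app D)).hom
  · intro x
    have key : HomologicalComplex.homologyMap f n ≫ ShortComplex.homologyMap (e.hom.app D) =
        ShortComplex.homologyMap (e.hom.app C) ≫ ShortComplex.homologyMap
          ((HomologicalComplex.shortComplexFunctor' (ModuleCat R)
            (ComplexShape.down ℕ) i n k).map f) := by
      show ShortComplex.homologyMap _ ≫ _ = _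
      rw [← ShortComplex.homologyMap_comp, ← ShortComplex.homologyMap_comp, hnat]
    have := congrArg (fun (g : C.homology n ⟶ (D.sc' i n k).homology) => g x) key
    exact this

lemma cx_surj (n i k : ℕ) (hi : (ComplexShape.down ℕ).prev n = i)
    (hk : (ComplexShape.down ℕ).next n = k)
    (h : Function.Surjective (HomologicalComplex.homologyMap f n)) :
    Function.Surjective (ShortComplex.homologyMap
      ((HomologicalComplex.shortComplexFunctor' (ModuleCat R)
        (ComplexShape.down ℕ) i n k).map f)) := by
  obtain ⟨A, B, hA, hB, hc⟩ := cx_conj f n i k hi hk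
  intro y
  obtain ⟨y', rfl⟩ := hB.2 y
  obtain ⟨x, rfl⟩ := h y'
  exact ⟨A x, (hc x).symm⟩

lemma cx_inj (n i k : ℕ) (hi : (ComplexShape.down ℕ).prev n = i)
    (hk : (ComplexShape.down ℕ).next n = k)
    (h : Function.Injective (HomologicalComplex.homologyMap f n)) :
    Function.Injective (ShortComplex.homologyMap
      ((HomologicalComplex.shortComplexFunctor' (ModuleCat R)
        (ComplexShape.down ℕ) i n k).map f)) := by
  obtain ⟨A, B, hA, hB, hc⟩ := cx_conj f n i k hi hk
  intro a b hab
  obtain ⟨a', rfl⟩ := hA.2 a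
  obtain ⟨b', rfl⟩ := hA.2 b
  rw [← hc, ← hc] at hab
  rw [h (hB.1 hab)]

end CxHelp


/-- Identities (1), (2), (3) in the proof of the 1-skeleton alignment lemma:
given `C₀`, `D₀` projective, `H₀(f)` bijective and `H₁(f)` surjective, there are
`g₀ : D₀ → C₀`, `s : D₀ → D₁`, `t : C₀ → C₁`, `u : C₀ → D₂` with
`f₀ ∘ g₀ + d ∘ s = id`, `g₀ ∘ f₀ + d ∘ t = id` and `d ∘ u + f₁ ∘ t = s ∘ f₀`. -/
theorem statement3 {R : Type*} [Ring R]
    (C D : ChainComplex (ModuleCat R) ℕ) (f : C ⟶ D)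
    (hCproj : Module.Projective R (C.X 0))
    (hDproj : Module.Projective R (D.X 0))
    (h0 : Function.Bijective (HomologicalComplex.homologyMap f 0))
    (h1 : Function.Surjective (HomologicalComplex.homologyMap f 1)) :
    ∃ (g₀ : D.X 0 ⟶ C.X 0) (s : D.X 0 ⟶ D.X 1) (t : C.X 0 ⟶ C.X 1) (u : C.X 0 ⟶ D.X 2),
      g₀ ≫ f.f 0 + s ≫ D.d 1 0 = 𝟙 (D.X 0) ∧
      f.f 0 ≫ g₀ + t ≫ C.d 1 0 = 𝟙 (C.X 0) ∧
      u ≫ D.d 2 1 + t ≫ f.f 1 = f.f 0 ≫ s := by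
  have hC00 : C.d 0 0 = 0 := C.shape 0 0 (by simp)
  have hD00 : D.d 0 0 = 0 := D.shape 0 0 (by simp)
  have hsurj0 := cx_surj f 0 1 0 (ChainComplex.prev ℕ 0) ChainComplex.next_nat_zero h0.2
  have hinj0 := cx_inj f 0 1 0 (ChainComplex.prev ℕ 0) ChainComplex.next_nat_zero h0.1
  have hsurj1 := cx_surj f 1 2 0 (ChainComplex.prev ℕ 1) (ChainComplex.next_nat_succ 0) h1
  have fact1 : ∀ y : D.X 0, ∃ (x : C.X 0) (w : D.X 1), f.f 0 x = y + D.d 1 0 w := by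
    intro y
    have hy : (D.sc' 1 0 0).g y = 0 := by
      show D.d 0 0 y = 0
      rw [hD00]; rfl
    obtain ⟨x, w, _, hxw⟩ := sc_surj _ hsurj0 y hy
    exact ⟨x, w, hxw⟩
  have fact2 : ∀ x : C.X 0, (∃ w : D.X 1, D.d 1 0 w = f.f 0 x) →
      ∃ v : C.X 1, C.d 1 0 v = x := by
    intro x hw
    have hx : (C.sc' 1 0 0).g x = 0 := by
      show C.d 0 0 x = 0
      rw [hC00]; rfl
    exact sc_inj _ hinj0 x hx hw
  have fact3 : ∀ z : D.X 1, D.d 1 0 z = 0 →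
      ∃ (x : C.X 1) (w : D.X 2), C.d 1 0 x = 0 ∧ f.f 1 x = z + D.d 2 1 w := by
    intro z hz
    obtain ⟨x, w, hx, hxw⟩ := sc_surj _ hsurj1 z hz
    exact ⟨x, w, hx, hxw⟩
  clear h0 h1 hsurj0 hinj0 hsurj1 hC00 hD00
  haveI := hCproj; haveI := hDproj
  set f0 : C.X 0 →ₗ[R] D.X 0 := (f.f 0).hom with hf0
  set f1 : C.X 1 →ₗ[R] D.X 1 := (f.f 1).hom with hf1
  set dC : C.X 1 →ₗ[R] C.X 0 := (C.d 1 0).hom with hdC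
  set dD : D.X 1 →ₗ[R] D.X 0 := (D.d 1 0).hom with hdD
  set dD2 : D.X 2 →ₗ[R] D.X 1 := (D.d 2 1).hom with hdD2
  set B := LinearMap.range dD with hB
  -- construct g₀
  have hsurj1 : Function.Surjective (B.mkQ ∘ₗ f0) := by
    intro q
    obtain ⟨y, rfl⟩ := B.mkQ_surjective q
    obtain ⟨x, w, hxw⟩ := fact1 y
    refine ⟨x, ?_⟩
    simp only [LinearMap.comp_apply, Submodule.mkQ_apply]
    rw [Submodule.Quotient.eq]
    exact ⟨w, by rw [hxw]; abel⟩
  obtain ⟨g₀, hg₀⟩ := Module.projective_lifting_property (B.mkQ ∘ₗ f0) B.mkQ hsurj1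
  have hg : ∀ y, f0 (g₀ y) - y ∈ B := by
    intro y
    have := LinearMap.ext_iff.1 hg₀ y
    simp only [LinearMap.comp_apply, Submodule.mkQ_apply] at this
    exact (Submodule.Quotient.eq B).1 this
  -- construct s
  have hmem1 : ∀ y, ((LinearMap.id : D.X 0 →ₗ[R] D.X 0) - f0 ∘ₗ g₀) y ∈ B := by
    intro y
    simpa [neg_sub] using B.neg_mem (hg y)
  obtain ⟨s, hs⟩ := Module.projective_lifting_property dD.rangeRestrict
    (LinearMap.codRestrict B ((LinearMap.id : D.X 0 →ₗ[R] D.X 0) - f0 ∘ₗ g₀) hmem1) dD.surjective_rangeRestrict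
  have hs' : ∀ y, dD (s y) = y - f0 (g₀ y) := by
    intro y
    have := congrArg Subtype.val (LinearMap.ext_iff.1 hs y)
    simpa using this
  -- construct t
  have hmem2 : ∀ x, ((LinearMap.id : C.X 0 →ₗ[R] C.X 0) - g₀ ∘ₗ f0) x ∈ LinearMap.range dC := by
    intro x
    obtain ⟨w, hw⟩ := hg (f0 x)
    obtain ⟨v, hv⟩ := fact2 (g₀ (f0 x) - x) ⟨w, by rw [map_sub]; exact hw⟩
    refine ⟨-v, ?_⟩
    simp only [map_neg, hv, LinearMap.sub_apply, LinearMap.id_apply, LinearMap.comp_apply]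
    rw [show dC v = g₀ (f0 x) - x from hv]
    abel
  obtain ⟨t, ht⟩ := Module.projective_lifting_property dC.rangeRestrict
    (LinearMap.codRestrict (LinearMap.range dC) ((LinearMap.id : C.X 0 →ₗ[R] C.X 0) - g₀ ∘ₗ f0) hmem2)
    dC.surjective_rangeRestrict
  have ht' : ∀ x, dC (t x) = x - g₀ (f0 x) := by
    intro x
    have := congrArg Subtype.val (LinearMap.ext_iff.1 ht x)
    simpa using this
  -- the defect map v
  set v : C.X 0 →ₗ[R] D.X 1 := s ∘ₗ f0 - f1 ∘ₗ t with hvdef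
  have hcomm : ∀ x : C.X 1, dD (f1 x) = f0 (dC x) := by
    intro x
    exact congrArg (fun (g : C.X 1 ⟶ D.X 0) => g x) (f.comm 1 0)
  have hdd : ∀ x : D.X 2, dD (dD2 x) = 0 := by
    intro x
    have := congrArg (fun (g : D.X 2 ⟶ D.X 0) => g x) (D.d_comp_d 2 1 0)
    exact this
  have hv : ∀ x, dD (v x) = 0 := by
    intro x
    simp only [hvdef, LinearMap.sub_apply, LinearMap.comp_apply, map_sub]
    rw [hs' (f0 x), hcomm (t x), ht' x, map_sub]
    abel
  -- cycles and the quotient Q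
  set Z1D := LinearMap.ker dD with hZ1D
  set ZC := LinearMap.ker dC with hZC
  set toC2 : D.X 2 →ₗ[R] Z1D := LinearMap.codRestrict Z1D dD2 (fun x => hdd x) with htoC2
  set N := LinearMap.range toC2 with hN
  have hf1mem : ∀ z : ZC, f1 (z : C.X 1) ∈ Z1D := by
    intro z
    have := hcomm (z : C.X 1)
    rw [LinearMap.mem_ker.mp z.2, map_zero] at this
    exact this
  set β : ZC →ₗ[R] (Z1D ⧸ N) :=
    N.mkQ ∘ₗ LinearMap.codRestrict Z1D (f1 ∘ₗ ZC.subtype) hf1mem with hβ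
  have hβsurj : Function.Surjective β := by
    intro q
    obtain ⟨z, rfl⟩ := N.mkQ_surjective q
    obtain ⟨x, w, hx, hxw⟩ := fact3 (z : D.X 1) (LinearMap.mem_ker.mp z.2)
    refine ⟨⟨x, LinearMap.mem_ker.mpr hx⟩, ?_⟩
    simp only [hβ, LinearMap.comp_apply, Submodule.mkQ_apply]
    rw [Submodule.Quotient.eq]
    exact ⟨w, Subtype.ext (show dD2 w = f1 x - (z : D.X 1) by
      rw [show f1 x = (z : D.X 1) + dD2 w from hxw]; abel)⟩
  set γ : C.X 0 →ₗ[R] (Z1D ⧸ N) :=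
    N.mkQ ∘ₗ LinearMap.codRestrict Z1D v (fun x => hv x) with hγ
  obtain ⟨wt, hwt⟩ := Module.projective_lifting_property β γ hβsurj
  have hwt' : ∀ x, v x - f1 ((wt x : C.X 1)) ∈ LinearMap.range dD2 := by
    intro x
    have := LinearMap.ext_iff.1 hwt x
    simp only [hβ, hγ, LinearMap.comp_apply, Submodule.mkQ_apply] at this
    obtain ⟨w, hw⟩ := (Submodule.Quotient.eq N).1 this
    have h2 := congrArg Subtype.val hw
    simp only [htoC2, LinearMap.codRestrict_apply, AddSubgroupClass.coe_sub,
      LinearMap.comp_apply, Submodule.coe_subtype] at h2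
    exact ⟨-w, by rw [map_neg, show dD2 w = f1 (wt x : C.X 1) - v x from h2]; abel⟩
  -- construct u
  obtain ⟨u, hu⟩ := Module.projective_lifting_property dD2.rangeRestrict
    (LinearMap.codRestrict (LinearMap.range dD2) (v - f1 ∘ₗ ZC.subtype ∘ₗ wt)
      (fun x => by simpa using hwt' x)) dD2.surjective_rangeRestrict
  have hu' : ∀ x, dD2 (u x) = v x - f1 ((wt x : C.X 1)) := by
    intro x
    have := congrArg Subtype.val (LinearMap.ext_iff.1 hu x)
    simpa using this
  -- finish
  refine ⟨ModuleCat.ofHom g₀, ModuleCat.ofHom s, ModuleCat.ofHom (t + ZC.subtype ∘ₗ wt),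
    ModuleCat.ofHom u, ?_, ?_, ?_⟩
  · refine ModuleCat.hom_ext <| LinearMap.ext fun y => ?_
    show f0 (g₀ y) + dD (s y) = y
    rw [hs' y]; abel
  · refine ModuleCat.hom_ext <| LinearMap.ext fun x => ?_
    show g₀ (f0 x) + dC (t x + (wt x : C.X 1)) = x
    rw [map_add, ht' x, LinearMap.mem_ker.mp (wt x).2]
    abel
  · refine ModuleCat.hom_ext <| LinearMap.ext fun x => ?_
    show dD2 (u x) + f1 (t x + (wt x : C.X 1)) = s (f0 x)
    rw [hu' x, map_add]
    have : v x = s (f0 x) - f1 (t x) := by simp [hvdef]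
    rw [this]; abel
end

section
/- Let R be a ring, let M be a projective R-module, and let f : C → D be a chain map of nonnegatively graded chain complexes of R-modules with C_0 = D_0 = M, such that the image of (id_M − f_0) : M → M is contained in the image of the differential d : D_1 → D_0 = M. Then there exists a chain map f' : C → D which is chain homotopic to f, with f'_0 = id_M and f'_n = f_n for all n ≥ 2. -/
open CategoryTheory

/-- Degree-0 normalization: if `C₀ = D₀ = M` with `M` projective and the image of
`id_M - f₀` is contained in the image of `d : D₁ → D₀ = M`, then `f` is chain
homotopic to a chain map `f'` with `f'₀ = id_M` and `f'ₙ = fₙ` for `n ≥ 2`. -/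
theorem statement5 {R : Type*} [Ring R] (M : ModuleCat R)
    (hM : Module.Projective R M)
    (C D : ChainComplex (ModuleCat R) ℕ) (f : C ⟶ D)
    (hC0 : C.X 0 = M) (hD0 : D.X 0 = M)
    (him : LinearMap.range (𝟙 M - (eqToHom hC0.symm ≫ f.f 0 ≫ eqToHom hD0)).hom ≤
           LinearMap.range (D.d 1 0 ≫ eqToHom hD0).hom) :
    ∃ f' : C ⟶ D, Nonempty (Homotopy f' f) ∧
      f'.f 0 = eqToHom hC0 ≫ eqToHom hD0.symm ∧
      ∀ n, 2 ≤ n → f'.f n = f.f n := by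
  subst hC0
  simp only [eqToHom_refl, Category.id_comp] at him ⊢
  have hM' : Module.Projective R (C.X 0) := hM
  obtain ⟨σ0, hσ⟩ := Module.projective_lifting_property
    (LinearMap.rangeRestrict (D.d 1 0 ≫ eqToHom hD0).hom)
    (LinearMap.codRestrict _ (𝟙 (C.X 0) - (f.f 0 ≫ eqToHom hD0)).hom
      (fun x => him (LinearMap.mem_range_self _ x)))
    (LinearMap.surjective_rangeRestrict _)
  let σ : C.X 0 ⟶ D.X 1 := ModuleCat.ofHom σ0
  have hσ' : (σ : C.X 0 ⟶ D.X 1) ≫ D.d 1 0 ≫ eqToHom hD0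
      = 𝟙 (C.X 0) - (f.f 0 ≫ eqToHom hD0) := by
    ext x
    exact congrArg Subtype.val (LinearMap.congr_fun hσ x)
  have hσd : (σ : C.X 0 ⟶ D.X 1) ≫ D.d 1 0 = eqToHom hD0.symm - f.f 0 := by
    have := congrArg (fun g => g ≫ eqToHom hD0.symm) hσ'
    simpa [Category.assoc, eqToHom_trans, Preadditive.sub_comp] using this
  let F : ∀ n, C.X n ⟶ D.X n := fun n => match n with
      | 0 => eqToHom hD0.symm
      | 1 => f.f 1 + C.d 1 0 ≫ (σ : C.X 0 ⟶ D.X 1)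
      | (n+2) => f.f (n+2)
  let H : ∀ i j, C.X i ⟶ D.X j := fun i j => match i, j with
      | 0, 1 => (σ : C.X 0 ⟶ D.X 1)
      | _, _ => 0
  refine ⟨{ f := F, comm' := ?_ }, ⟨{ hom := H, zero := ?_, comm := ?_ }⟩, rfl, ?_⟩
  · rintro i j (rfl : j + 1 = i)
    match j with
    | 0 =>
      show (f.f 1 + C.d 1 0 ≫ (σ : C.X 0 ⟶ D.X 1)) ≫ D.d 1 0 = C.d 1 0 ≫ eqToHom hD0.symm
      rw [Preadditive.add_comp, Category.assoc, hσd, f.comm, Preadditive.comp_sub]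
      abel
    | 1 =>
      show f.f 2 ≫ D.d 2 1 = C.d 2 1 ≫ (f.f 1 + C.d 1 0 ≫ (σ : C.X 0 ⟶ D.X 1))
      rw [Preadditive.comp_add, f.comm, HomologicalComplex.d_comp_d_assoc]
      simp
    | (n+2) =>
      exact f.comm _ _
  · intro i j hij
    match i, j with
    | 0, 1 => exact absurd rfl hij
    | 0, 0 => rfl
    | 0, (j+2) => rfl
    | (i+1), 0 => rfl
    | (i+1), (j+1) => rfl
  · intro i
    match i with
    | 0 =>
      show eqToHom hD0.symm = _
      rw [Homotopy.dNext_zero_chainComplex, Homotopy.prevD_chainComplex]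
      show _ = 0 + (σ : C.X 0 ⟶ D.X 1) ≫ D.d 1 0 + f.f 0
      rw [hσd]; abel
    | 1 =>
      show f.f 1 + C.d 1 0 ≫ (σ : C.X 0 ⟶ D.X 1) = _
      rw [Homotopy.dNext_succ_chainComplex, Homotopy.prevD_chainComplex]
      show _ = C.d 1 0 ≫ (σ : C.X 0 ⟶ D.X 1) + (0 : C.X 1 ⟶ D.X 2) ≫ D.d 2 1 + f.f 1
      simp; abel
    | (n+2) =>
      show f.f (n+2) = _
      rw [Homotopy.dNext_succ_chainComplex, Homotopy.prevD_chainComplex]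
      show _ = C.d (n+2) (n+1) ≫ (0 : C.X (n+1) ⟶ D.X (n+2)) + (0 : C.X (n+2) ⟶ D.X (n+3)) ≫ D.d _ _ + f.f (n+2)
      simp
  · rintro (_|_|n) hn
    · omega
    · omega
    · rfl
end

section
/- Let R be a ring and let f : C → D be a chain map of nonnegatively graded chain complexes of R-modules such that D_1 is a projective R-module, f_0 : C_0 → D_0 is bijective, H_0(f) : H_0(C) → H_0(D) is bijective, and H_1(f) : H_1(C) → H_1(D) is surjective. Then there exist R-linear maps g : D_1 → C_1 and s : D_1 → D_2 such that f_1 ∘ g + d ∘ s = id_{D_1}, where d : D_2 → D_1 is the differential. -/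
open CategoryTheory

section Aux

variable {R : Type*} [Ring R] {ι : Type*} {c : ComplexShape ι}

/-- In `ModuleCat R`, any element killed by the differential lifts to `cycles`. -/
lemma aux_exists_cycle (K : HomologicalComplex (ModuleCat R) c) (i j : ι)
    (hj : c.next i = j) (y : K.X i) (hy : K.d i j y = 0) :
    ∃ z : K.cycles i, K.iCycles i z = y := by
  subst hj
  refine ⟨(K.sc i).moduleCatCyclesIso.inv ⟨y, hy⟩, ?_⟩
  exact (K.sc i).moduleCatCyclesIso_inv_iCycles_apply ⟨y, hy⟩

/-- In `ModuleCat R`, a cycle whose homology class vanishes is a boundary. -/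
lemma aux_exists_boundary (K : HomologicalComplex (ModuleCat R) c) (i j : ι)
    (hi : c.prev j = i) (z : K.cycles j) (hz : K.homologyπ j z = 0) :
    ∃ b : K.X i, K.toCycles i j b = z := by
  have hex : (ShortComplex.mk (K.toCycles i j) (K.homologyπ j)
      (K.toCycles_comp_homologyπ i j)).Exact :=
    ShortComplex.exact_of_g_is_cokernel _ (K.homologyIsCokernel i j hi)
  exact (ShortComplex.moduleCat_exact_iff _).1 hex z hz

lemma aux_homologyπ_surjective (K : HomologicalComplex (ModuleCat R) c) (i : ι)
    [K.HasHomology i] : Function.Surjective (K.homologyπ i) := by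
  rw [← ModuleCat.epi_iff_surjective]
  infer_instance

lemma aux_iCycles_injective (K : HomologicalComplex (ModuleCat R) c) (i : ι)
    [K.HasHomology i] : Function.Injective (K.iCycles i) := by
  rw [← ModuleCat.mono_iff_injective]
  infer_instance

end Aux

/-- Identity (1) of the algebraic 1-skeleton alignment: if `D₁` is projective, `f₀`
is bijective, `H₀(f)` is bijective and `H₁(f)` is surjective, there are
`g : D₁ → C₁` and `s : D₁ → D₂` with `f₁ ∘ g + d ∘ s = id`. -/
theorem statement7 {R : Type*} [Ring R]
    (C D : ChainComplex (ModuleCat R) ℕ) (f : C ⟶ D)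
    (hproj : Module.Projective R (D.X 1))
    (hf0 : Function.Bijective (f.f 0))
    (h0 : Function.Bijective (HomologicalComplex.homologyMap f 0))
    (h1 : Function.Surjective (HomologicalComplex.homologyMap f 1)) :
    ∃ (g : D.X 1 ⟶ C.X 1) (s : D.X 1 ⟶ D.X 2),
      g ≫ f.f 1 + s ≫ D.d 2 1 = 𝟙 (D.X 1) := by
  -- the map `C₁ × D₂ → D₁`, `(c, e) ↦ f₁ c + d e`
  set ψ : (C.X 1 × D.X 2) →ₗ[R] D.X 1 :=
    LinearMap.coprod (f.f 1).hom (D.d 2 1).hom with hψ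
  -- key step: `ψ` is surjective
  have hsurj : Function.Surjective ψ := by
    intro x
    -- pull back `d x` along the bijective `f₀`
    set e0 := Equiv.ofBijective _ hf0 with he0
    set c₀ : C.X 0 := e0.symm (D.d 1 0 x) with hc₀
    have hfc₀ : f.f 0 c₀ = D.d 1 0 x := e0.apply_symm_apply _
    -- `c₀` is a cycle in degree 0
    obtain ⟨z₀, hz₀⟩ := aux_exists_cycle C 0 0 (by simp) c₀
      (by rw [C.shape 0 0 (by simp)]; rfl)
    -- its class dies in `H₀ D`, hence it dies in `H₀ C` by injectivity
    have hmap : HomologicalComplex.cyclesMap f 0 z₀ = D.toCycles 1 0 x := by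
      apply aux_iCycles_injective D 0
      have h1' := ConcreteCategory.congr_hom (HomologicalComplex.cyclesMap_i f 0) z₀
      have h2' := ConcreteCategory.congr_hom (D.toCycles_i 1 0) x
      simp only [ConcreteCategory.comp_apply] at h1' h2' ⊢
      rw [h1', h2', hz₀, hfc₀]
    have hπz₀ : C.homologyπ 0 z₀ = 0 := by
      apply h0.1
      have hnat := ConcreteCategory.congr_hom (HomologicalComplex.homologyπ_naturality f 0) z₀
      simp only [ConcreteCategory.comp_apply] at hnat
      rw [hnat, hmap, map_zero]
      exact ConcreteCategory.congr_hom (D.toCycles_comp_homologyπ 1 0) x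
    obtain ⟨c₁, hc₁⟩ := aux_exists_boundary C 1 0 (by simp) z₀ hπz₀
    have hdc₁ : C.d 1 0 c₁ = c₀ := by
      have := ConcreteCategory.congr_hom (C.toCycles_i 1 0) c₁
      simp only [ConcreteCategory.comp_apply] at this
      rw [← this, hc₁, hz₀]
    -- `y := x - f₁ c₁` is a cycle in degree 1
    set y : D.X 1 := x - f.f 1 c₁ with hy
    have hdy : D.d 1 0 y = 0 := by
      have hcomm := ConcreteCategory.congr_hom (f.comm 1 0) c₁
      simp only [ConcreteCategory.comp_apply] at hcomm
      rw [hy, map_sub, hcomm, hdc₁, hfc₀, sub_self]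
    obtain ⟨zy, hzy⟩ := aux_exists_cycle D 1 0 (by simp) y hdy
    -- use surjectivity of `H₁ f`
    obtain ⟨h, hh⟩ := h1 (D.homologyπ 1 zy)
    obtain ⟨zw, hzw⟩ := aux_homologyπ_surjective C 1 h
    have hπ : D.homologyπ 1 (HomologicalComplex.cyclesMap f 1 zw - zy) = 0 := by
      have hnat := ConcreteCategory.congr_hom (HomologicalComplex.homologyπ_naturality f 1) zw
      simp only [ConcreteCategory.comp_apply] at hnat
      rw [map_sub, ← hnat, hzw, hh, sub_self]
    obtain ⟨e, he⟩ := aux_exists_boundary D 2 1 (by simp) _ hπ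
    -- unwind: `f₁ (iCycles zw) - y = d e`
    have hkey : f.f 1 (C.iCycles 1 zw) - y = D.d 2 1 e := by
      have h3' := ConcreteCategory.congr_hom (D.toCycles_i 2 1) e
      have h4' := ConcreteCategory.congr_hom (HomologicalComplex.cyclesMap_i f 1) zw
      simp only [ConcreteCategory.comp_apply] at h3' h4'
      calc f.f 1 (C.iCycles 1 zw) - y
          = D.iCycles 1 (HomologicalComplex.cyclesMap f 1 zw - zy) := by
            rw [map_sub, h4', hzy]
        _ = D.iCycles 1 (D.toCycles 2 1 e) := by rw [he]
        _ = D.d 2 1 e := h3'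
    refine ⟨(c₁ + C.iCycles 1 zw, -e), ?_⟩
    have : ψ (c₁ + C.iCycles 1 zw, -e) =
        f.f 1 c₁ + f.f 1 (C.iCycles 1 zw) - D.d 2 1 e := by
      simp [hψ, map_add, map_neg]
      abel
    rw [this, ← hkey, hy]
    abel
  -- lift the identity along `ψ` using projectivity of `D₁`
  obtain ⟨h, hh⟩ := Module.projective_lifting_property ψ LinearMap.id hsurj
  refine ⟨ModuleCat.ofHom (LinearMap.fst R (C.X 1) (D.X 2) ∘ₗ h), ModuleCat.ofHom (LinearMap.snd R (C.X 1) (D.X 2) ∘ₗ h), ?_⟩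
  apply ModuleCat.hom_ext
  apply LinearMap.ext
  intro x
  have := LinearMap.congr_fun hh x
  simpa [hψ, LinearMap.coprod_apply] using this
end

section
/- Let R be a ring and let f : C → D be a chain map of nonnegatively graded chain complexes of finitely generated free R-modules such that f_0 : C_0 → D_0 is an isomorphism, H_0(f) : H_0(C) → H_0(D) is bijective, and H_1(f) : H_1(C) → H_1(D) is surjective. Then there exist nonnegatively graded chain complexes C', D' of finitely generated free R-modules with C'_n = C_n and D'_n = D_n for n = 0 and for all n ≥ 3, chain homotopy equivalences a : C → C' and b : D → D' which are isomorphisms in degree 0 and equal the identity in degrees n ≥ 3, and a chain map f' : C' → D' whose components f'_0 and f'_1 are isomorphisms, such that f' ∘ a is chain homotopic to b ∘ f. -/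
open CategoryTheory

namespace Stmt8

variable {R : Type*} [Ring R]

lemma elem {M N : ModuleCat R} {f g : M ⟶ N} (h : f = g) (x : M) : f x = g x := by rw [h]

lemma comp_elem {M N P : ModuleCat R} (f : M ⟶ N) (g : N ⟶ P) (x : M) : (f ≫ g) x = g (f x) := rfl

lemma iso_hom_inv_elem {M N : ModuleCat R} (e : M ≅ N) (x : N) : e.hom (e.inv x) = x := by
  rw [← comp_elem, Iso.inv_hom_id]; rfl

lemma scInj {S₁ S₂ : ShortComplex (ModuleCat R)} (φ : S₁ ⟶ S₂)
    (hinj : Function.Injective (ShortComplex.homologyMap φ))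
    (x : S₁.X₂) (hx : S₁.g x = 0) (u : S₂.X₁) (hu : S₂.f u = φ.τ₂ x) :
    ∃ w, S₁.f w = x := by
  set x' : LinearMap.ker S₁.g.hom := ⟨x, hx⟩ with hx'
  set c : S₁.cycles := S₁.moduleCatCyclesIso.inv x' with hc
  have hic : S₁.iCycles c = x := S₁.moduleCatCyclesIso_inv_iCycles_apply x'
  have h1 : ShortComplex.homologyMap φ (S₁.homologyπ c) =
      S₂.homologyπ (ShortComplex.cyclesMap φ c) := by
    have h := elem (ShortComplex.homologyπ_naturality φ) c
    rw [comp_elem, comp_elem] at h; exact h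
  have h2 : ShortComplex.cyclesMap φ c = S₂.toCycles u := by
    have hmono : Function.Injective (S₂.iCycles) :=
      (ModuleCat.mono_iff_injective _).1 inferInstance
    apply hmono
    have e1 : S₂.iCycles (ShortComplex.cyclesMap φ c) = φ.τ₂ (S₁.iCycles c) := by
      have h := elem (ShortComplex.cyclesMap_i φ) c
      rw [comp_elem, comp_elem] at h; exact h
    have e2 : S₂.iCycles (S₂.toCycles u) = S₂.f u := by
      have h := elem (S₂.toCycles_i) u
      rw [comp_elem] at h; exact h
    rw [e1, e2, hic, hu]
  have h3 : S₂.homologyπ (S₂.toCycles u) = 0 := by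
    have h := elem (S₂.toCycles_comp_homologyπ) u
    rw [comp_elem] at h; exact h
  have h4 : S₁.homologyπ c = 0 := by
    apply hinj
    rw [h1, h2, h3, map_zero]
  have h5 : S₁.moduleCatLeftHomologyData.π x' = 0 := by
    have h := elem (S₁.π_moduleCatCyclesIso_hom) c
    rw [comp_elem, comp_elem] at h
    rw [h4, map_zero] at h
    rw [hc] at h
    erw [iso_hom_inv_elem] at h
    exact h.symm
  replace h5 : (Submodule.Quotient.mk x' :
    LinearMap.ker S₁.g.hom ⧸ LinearMap.range S₁.moduleCatToCycles) = 0 := h5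
  rw [Submodule.Quotient.mk_eq_zero] at h5
  obtain ⟨w, hw⟩ := h5
  exact ⟨w, congrArg Subtype.val hw⟩

lemma scSurj {S₁ S₂ : ShortComplex (ModuleCat R)} (φ : S₁ ⟶ S₂)
    (hsurj : Function.Surjective (ShortComplex.homologyMap φ))
    (y : S₂.X₂) (hy : S₂.g y = 0) :
    ∃ x, S₁.g x = 0 ∧ ∃ u, S₂.f u = φ.τ₂ x - y := by
  set y' : LinearMap.ker S₂.g.hom := ⟨y, hy⟩ with hy'
  obtain ⟨h, hh⟩ := hsurj (S₂.homologyπ (S₂.moduleCatCyclesIso.inv y'))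
  obtain ⟨c, rfl⟩ := (ModuleCat.epi_iff_surjective S₁.homologyπ).1 inferInstance h
  refine ⟨S₁.iCycles c, ?_, ?_⟩
  · have h := elem (S₁.iCycles_g) c
    rw [comp_elem] at h; exact h
  · have h1 : ShortComplex.homologyMap φ (S₁.homologyπ c) =
        S₂.homologyπ (ShortComplex.cyclesMap φ c) := by
      have h := elem (ShortComplex.homologyπ_naturality φ) c
      rw [comp_elem, comp_elem] at h; exact h
    rw [h1] at hh
    have h2 := congrArg (S₂.moduleCatHomologyIso.hom) hh
    have key : ∀ (z : S₂.cycles), S₂.moduleCatHomologyIso.hom (S₂.homologyπ z) =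
        S₂.moduleCatLeftHomologyData.π (S₂.moduleCatCyclesIso.hom z) := by
      intro z
      have h := elem (S₂.π_moduleCatCyclesIso_hom) z
      rw [comp_elem, comp_elem] at h; exact h
    rw [key, key] at h2
    erw [iso_hom_inv_elem] at h2
    replace h2 : (Submodule.Quotient.mk (S₂.moduleCatCyclesIso.hom ((ShortComplex.cyclesMap φ) c)) :
      LinearMap.ker S₂.g.hom ⧸ LinearMap.range S₂.moduleCatToCycles) = Submodule.Quotient.mk y' := h2
    replace h2 := (Submodule.Quotient.eq _).1 h2
    obtain ⟨u, hu⟩ := h2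
    refine ⟨u, ?_⟩
    have hval := congrArg Subtype.val hu
    have e1 : (S₂.moduleCatCyclesIso.hom ((ShortComplex.cyclesMap φ) c)).1
        = S₂.iCycles ((ShortComplex.cyclesMap φ) c) := by
      have h := elem (S₂.moduleCatCyclesIso_hom_i) ((ShortComplex.cyclesMap φ) c)
      rw [comp_elem] at h; exact h
    have e2 : S₂.iCycles ((ShortComplex.cyclesMap φ) c) = φ.τ₂ (S₁.iCycles c) := by
      have h := elem (ShortComplex.cyclesMap_i φ) c
      rw [comp_elem, comp_elem] at h; exact h
    have hval' : S₂.f u = (S₂.moduleCatCyclesIso.hom ((ShortComplex.cyclesMap φ) c)).1 - y := hval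
    rw [hval', e1, e2]


variable {ι : Type*} {cs : ComplexShape ι} (K L : HomologicalComplex (ModuleCat R) cs)
  (f : K ⟶ L) (i j k : ι)

lemma homologyMap_conj (hi : cs.prev j = i) (hk : cs.next j = k) :
    ∀ (z : K.homology j),
      ShortComplex.homologyMap ((HomologicalComplex.shortComplexFunctor' (ModuleCat R) cs i j k).map f)
        ((K.homologyIsoSc' i j k hi hk).hom z) =
      (L.homologyIsoSc' i j k hi hk).hom (HomologicalComplex.homologyMap f j z) := by
  intro z
  have comm : (K.isoSc' i j k hi hk).hom ≫
      (HomologicalComplex.shortComplexFunctor' (ModuleCat R) cs i j k).map f =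
      (HomologicalComplex.shortComplexFunctor (ModuleCat R) cs j).map f ≫
      (L.isoSc' i j k hi hk).hom :=
    ((HomologicalComplex.natIsoSc' (ModuleCat R) cs i j k hi hk).hom.naturality f).symm
  have h : ShortComplex.homologyMap ((K.isoSc' i j k hi hk).hom ≫
      (HomologicalComplex.shortComplexFunctor' (ModuleCat R) cs i j k).map f) =
      ShortComplex.homologyMap ((HomologicalComplex.shortComplexFunctor (ModuleCat R) cs j).map f ≫
      (L.isoSc' i j k hi hk).hom) := by rw [comm]
  simp only [ShortComplex.homologyMap_comp] at h
  have := elem h z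
  exact this

lemma bij_conj (hi : cs.prev j = i) (hk : cs.next j = k) : Function.Bijective
    ((K.homologyIsoSc' i j k hi hk).hom) :=
  ⟨(ModuleCat.mono_iff_injective _).1 inferInstance,
   (ModuleCat.epi_iff_surjective _).1 inferInstance⟩

lemma keyInj (hi : cs.prev j = i) (hk : cs.next j = k) (hinj : Function.Injective (HomologicalComplex.homologyMap f j))
    (x : K.X j) (hx : K.d j k x = 0) (u : L.X i) (hu : L.d i j u = f.f j x) :
    ∃ w, K.d i j w = x := by
  have hb := bij_conj K i j k hi hk
  have hbL := bij_conj L i j k hi hk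
  have hinj' : Function.Injective (ShortComplex.homologyMap
      ((HomologicalComplex.shortComplexFunctor' (ModuleCat R) cs i j k).map f)) := by
    intro a b hab
    obtain ⟨a₀, rfl⟩ := hb.2 a
    obtain ⟨b₀, rfl⟩ := hb.2 b
    rw [homologyMap_conj K L f i j k hi hk, homologyMap_conj K L f i j k hi hk] at hab
    exact congrArg _ (hinj (hbL.1 hab))
  exact scInj _ hinj' x hx u hu

lemma keySurj (hi : cs.prev j = i) (hk : cs.next j = k) (hsurj : Function.Surjective (HomologicalComplex.homologyMap f j))
    (y : L.X j) (hy : L.d j k y = 0) :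
    ∃ x, K.d j k x = 0 ∧ ∃ u, L.d i j u = f.f j x - y := by
  have hb := bij_conj K i j k hi hk
  have hbL := bij_conj L i j k hi hk
  have hsurj' : Function.Surjective (ShortComplex.homologyMap
      ((HomologicalComplex.shortComplexFunctor' (ModuleCat R) cs i j k).map f)) := by
    intro z
    obtain ⟨z₀, rfl⟩ := hbL.2 z
    obtain ⟨w₀, hw₀⟩ := hsurj z₀
    exact ⟨_, (homologyMap_conj K L f i j k hi hk w₀).trans (by rw [hw₀])⟩
  exact scSurj _ hsurj' y hy

section Twist
variable (C : ChainComplex (ModuleCat R) ℕ) (M : ModuleCat R)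

lemma dd (i j k : ℕ) (x : C.X i) : C.d j k (C.d i j x) = 0 := by
  have h := elem (C.d_comp_d i j k) x
  rw [comp_elem] at h
  simpa using h

def twistX : ℕ → ModuleCat R
  | 0 => C.X 0
  | 1 => ModuleCat.of R (C.X 1 × M)
  | 2 => ModuleCat.of R (C.X 2 × M)
  | (n+3) => C.X (n+3)

variable (g : M →ₗ[R] C.X 0) (s : M →ₗ[R] C.X 1) (hs : ∀ y, C.d 1 0 (s y) = - g y)

def twistd : ∀ n : ℕ, ↑(twistX C M (n+1)) →ₗ[R] ↑(twistX C M n)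
  | 0 => (LinearMap.comp (C.d 1 0).hom (LinearMap.fst R (C.X 1) M)) +
         (LinearMap.comp g (LinearMap.snd R (C.X 1) M))
  | 1 => LinearMap.prod
      ((LinearMap.comp (C.d 2 1).hom (LinearMap.fst R (C.X 2) M)) +
       (LinearMap.comp s (LinearMap.snd R (C.X 2) M)))
      (LinearMap.snd R (C.X 2) M)
  | 2 => LinearMap.prod (C.d 3 2).hom 0
  | (n+3) => (C.d (n+4) (n+3)).hom

def twist : ChainComplex (ModuleCat R) ℕ :=
  ChainComplex.of (twistX C M) (fun n => ModuleCat.ofHom (twistd C M g s n)) (by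
    rintro (_|_|_|n)
    · apply ModuleCat.hom_ext; apply LinearMap.ext; rintro ⟨x,y⟩
      show C.d 1 0 (C.d 2 1 x + s y) + g y = 0
      simp [dd, hs]
    · apply ModuleCat.hom_ext; apply LinearMap.ext; intro x
      show ((C.d 2 1 (C.d 3 2 x) + s 0, (0 : M)) : ↑(C.X 1) × ↑M) = 0
      rw [map_zero s]
      simp [dd]
      exact dd C _ _ _ x
    · apply ModuleCat.hom_ext; apply LinearMap.ext; intro x
      show ((C.d 3 2 (C.d 4 3 x), (0 : M)) : ↑(C.X 2) × ↑M) = 0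
      simp [dd]
      exact dd C _ _ _ x
    · apply ModuleCat.hom_ext; apply LinearMap.ext; intro x
      show (twistd C M g s (n+3)) ((twistd C M g s (n+4)) x) = 0
      exact dd C _ _ _ x)

end Twist

section TwistMaps
variable (C : ChainComplex (ModuleCat R) ℕ) (M : ModuleCat R)
  (g : M →ₗ[R] C.X 0) (s : M →ₗ[R] C.X 1) (hs : ∀ y, C.d 1 0 (s y) = - g y)

lemma twist_d0 : (twist C M g s hs).d 1 0 = ModuleCat.ofHom (twistd C M g s 0) := ChainComplex.of_d (twistX C M) (fun n => ModuleCat.ofHom (twistd C M g s n)) 0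
lemma twist_d1 : (twist C M g s hs).d 2 1 = ModuleCat.ofHom (twistd C M g s 1) := ChainComplex.of_d (twistX C M) (fun n => ModuleCat.ofHom (twistd C M g s n)) 1
lemma twist_d2 : (twist C M g s hs).d 3 2 = ModuleCat.ofHom (twistd C M g s 2) := ChainComplex.of_d (twistX C M) (fun n => ModuleCat.ofHom (twistd C M g s n)) 2
lemma twist_d3 (n : ℕ) : (twist C M g s hs).d (n+4) (n+3) = ModuleCat.ofHom (twistd C M g s (n+3)) :=
  ChainComplex.of_d (twistX C M) (fun n => ModuleCat.ofHom (twistd C M g s n)) (n+3)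
lemma twist_d4 (n : ℕ) : (twist C M g s hs).d (n+4+1) (n+4) = ModuleCat.ofHom (twistd C M g s (n+4)) :=
  ChainComplex.of_d (twistX C M) (fun n => ModuleCat.ofHom (twistd C M g s n)) (n+4)

def twistIncl : C ⟶ twist C M g s hs where
  f n := match n with
    | 0 => 𝟙 (C.X 0)
    | 1 => ModuleCat.ofHom (LinearMap.inl R (C.X 1) M : ↑(C.X 1) →ₗ[R] ↑(C.X 1) × ↑M)
    | 2 => ModuleCat.ofHom (LinearMap.inl R (C.X 2) M : ↑(C.X 2) →ₗ[R] ↑(C.X 2) × ↑M)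
    | (n+3) => 𝟙 (C.X (n+3))
  comm' := by
    rintro i j (rfl : j + 1 = i)
    match j with
    | 0 =>
      rw [twist_d0]
      apply ModuleCat.hom_ext; apply LinearMap.ext; intro x
      show C.d 1 0 x + g 0 = C.d 1 0 x
      rw [map_zero g, add_zero]
    | 1 =>
      rw [twist_d1]
      apply ModuleCat.hom_ext; apply LinearMap.ext; intro x
      show ((C.d 2 1 x + s 0, (0:M)) : ↑(C.X 1) × ↑M) = (C.d 2 1 x, 0)
      rw [map_zero s, add_zero]
    | 2 =>
      rw [twist_d2]
      apply ModuleCat.hom_ext; apply LinearMap.ext; intro x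
      rfl
    | (n+3) =>
      rw [twist_d3]
      apply ModuleCat.hom_ext; apply LinearMap.ext; intro x
      rfl

def twistProj : twist C M g s hs ⟶ C where
  f n := match n with
    | 0 => 𝟙 (C.X 0)
    | 1 => ModuleCat.ofHom ((LinearMap.fst R (C.X 1) M) - s.comp (LinearMap.snd R (C.X 1) M) :
        ↑(C.X 1) × ↑M →ₗ[R] ↑(C.X 1))
    | 2 => ModuleCat.ofHom (LinearMap.fst R (C.X 2) M : ↑(C.X 2) × ↑M →ₗ[R] ↑(C.X 2))
    | (n+3) => 𝟙 (C.X (n+3))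
  comm' := by
    rintro i j (rfl : j + 1 = i)
    match j with
    | 0 =>
      rw [twist_d0]
      apply ModuleCat.hom_ext; apply LinearMap.ext; rintro ⟨x, y⟩
      show C.d 1 0 (x - s y) = C.d 1 0 x + g y
      rw [map_sub, hs, sub_neg_eq_add]
    | 1 =>
      rw [twist_d1]
      apply ModuleCat.hom_ext; apply LinearMap.ext; rintro ⟨x, y⟩
      show C.d 2 1 x = (C.d 2 1 x + s y) - s y
      rw [add_sub_cancel_right]
    | 2 =>
      rw [twist_d2]
      apply ModuleCat.hom_ext; apply LinearMap.ext; intro x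
      rfl
    | (n+3) =>
      rw [twist_d3]
      apply ModuleCat.hom_ext; apply LinearMap.ext; intro x
      rfl

end TwistMaps

section TwistHtpy
variable (C : ChainComplex (ModuleCat R) ℕ) (M : ModuleCat R)
  (g : M →ₗ[R] C.X 0) (s : M →ₗ[R] C.X 1) (hs : ∀ y, C.d 1 0 (s y) = - g y)

lemma twistProj_incl : twistIncl C M g s hs ≫ twistProj C M g s hs = 𝟙 C := by
  ext n : 3
  match n with
  | 0 => rfl
  | 1 =>
    rename_i x
    show x - s 0 = x
    rw [map_zero s, sub_zero]
  | 2 => rfl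
  | (n+3) => rfl

def twistHtpy : Homotopy (twistProj C M g s hs ≫ twistIncl C M g s hs)
    (𝟙 (twist C M g s hs)) where
  hom i j := match i, j with
    | 1, 2 => ModuleCat.ofHom (LinearMap.prod 0 (-(LinearMap.snd R (C.X 1) M)) :
        ↑(C.X 1) × ↑M →ₗ[R] ↑(C.X 2) × ↑M)
    | 0, _ => 0
    | 1, _ => 0
    | (_+2), _ => 0
  zero i j hij := by
    match i, j with
    | 1, 2 => exact absurd rfl hij
    | 0, j => rfl
    | 1, 0 => rfl
    | 1, 1 => rfl
    | 1, (k+3) => rfl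
    | (i+2), j => rfl
  comm i := by
    match i with
    | 0 =>
      rw [dNext_eq_zero _ 0 (by rw [ChainComplex.next_nat_zero]; simp),
        prevD_eq _ (show (ComplexShape.down ℕ).Rel (0+1) 0 from rfl)]
      apply ModuleCat.hom_ext; apply LinearMap.ext; intro x
      show x = 0 + (twist C M g s hs).d 1 0 0 + x
      rw [map_zero]
      simp
    | 1 =>
      rw [dNext_eq _ (show (ComplexShape.down ℕ).Rel 1 0 from rfl),
        prevD_eq _ (show (ComplexShape.down ℕ).Rel (1+1) 1 from rfl), twist_d1]
      apply ModuleCat.hom_ext; apply LinearMap.ext; rintro ⟨x, y⟩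
      show ((x - s y, (0:M)) : ↑(C.X 1) × ↑M)
          = 0 + (C.d 2 1 0 + s (-y), -y) + (x, y)
      rw [map_zero (ConcreteCategory.hom (C.d 2 1)), map_neg s]
      refine Prod.ext ?_ ?_ <;> simp <;> abel
    | 2 =>
      rw [dNext_eq _ (show (ComplexShape.down ℕ).Rel 2 1 from rfl),
        prevD_eq _ (show (ComplexShape.down ℕ).Rel (2+1) 2 from rfl), twist_d1]
      apply ModuleCat.hom_ext; apply LinearMap.ext; rintro ⟨x, y⟩
      show Eq (α := ↑(C.X 2) × ↑M) (x, (0:M))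
        (((0:↑(C.X 2)), -y) + (C.d 3 2 0, (0:M)) + (x, y))
      rw [map_zero (ConcreteCategory.hom (C.d 3 2))]
      refine Prod.ext ?_ ?_ <;> simp
    | 3 =>
      rw [dNext_eq _ (show (ComplexShape.down ℕ).Rel 3 2 from rfl),
        prevD_eq _ (show (ComplexShape.down ℕ).Rel (3+1) 3 from rfl), twist_d2]
      apply ModuleCat.hom_ext; apply LinearMap.ext; intro x
      show x = 0 + (twist C M g s hs).d 4 3 0 + x
      rw [map_zero (ConcreteCategory.hom ((twist C M g s hs).d 4 3))]
      simp
    | (n+4) =>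
      rw [dNext_eq _ (show (ComplexShape.down ℕ).Rel (n+4) (n+3) from rfl),
        prevD_eq _ (show (ComplexShape.down ℕ).Rel (n+4+1) (n+4) from rfl)]
      apply ModuleCat.hom_ext; apply LinearMap.ext; intro x
      show x = 0 + (twist C M g s hs).d (n+5) (n+4) 0 + x
      rw [map_zero (ConcreteCategory.hom ((twist C M g s hs).d (n+5) (n+4)))]
      simp

def twistEquiv : HomotopyEquiv C (twist C M g s hs) where
  hom := twistIncl C M g s hs
  inv := twistProj C M g s hs
  homotopyHomInvId := Homotopy.ofEq (twistProj_incl C M g s hs)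
  homotopyInvHomId := twistHtpy C M g s hs

end TwistHtpy

section TwistMap
variable (C D : ChainComplex (ModuleCat R) ℕ) (f : C ⟶ D)

lemma fcomm (i j : ℕ) (x : C.X i) : D.d i j (f.f i x) = f.f j (C.d i j x) := by
  have h := elem (f.comm i j) x
  rw [comp_elem, comp_elem] at h; exact h

variable (g : ↑(D.X 1) →ₗ[R] ↑(C.X 0)) (s : ↑(D.X 1) →ₗ[R] ↑(C.X 1))
  (hs : ∀ y, C.d 1 0 (s y) = - g y)
  (hg : ∀ y, f.f 0 (g y) = D.d 1 0 y)
  (p : ↑(D.X 1) →ₗ[R] ↑(D.X 2)) (hp : ∀ y, D.d 2 1 (p y) = f.f 1 (s y) + y)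
  (hz : ∀ y : ↑(C.X 1), D.d 1 0 ((0 : ↑(C.X 1) →ₗ[R] ↑(D.X 1)) y)
      = - (0 : ↑(C.X 1) →ₗ[R] ↑(D.X 0)) y)

def twistMap : twist C (D.X 1) g s hs ⟶ twist D (C.X 1) 0 0 hz where
  f n := match n with
    | 0 => f.f 0
    | 1 => ModuleCat.ofHom (LinearMap.prod ((f.f 1).hom.comp
          (LinearMap.fst R (C.X 1) (D.X 1)) + LinearMap.snd R (C.X 1) (D.X 1))
          (LinearMap.fst R (C.X 1) (D.X 1)) :
          ↑(C.X 1) × ↑(D.X 1) →ₗ[R] ↑(D.X 1) × ↑(C.X 1))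
    | 2 => ModuleCat.ofHom (LinearMap.prod
          ((f.f 2).hom.comp (LinearMap.fst R (C.X 2) (D.X 1))
            + p.comp (LinearMap.snd R (C.X 2) (D.X 1)))
          ((C.d 2 1).hom.comp (LinearMap.fst R (C.X 2) (D.X 1))
            + s.comp (LinearMap.snd R (C.X 2) (D.X 1))) :
          ↑(C.X 2) × ↑(D.X 1) →ₗ[R] ↑(D.X 2) × ↑(C.X 1))
    | (n+3) => f.f (n+3)
  comm' := by
    rintro i j (rfl : j + 1 = i)
    match j with
    | 0 =>
      rw [twist_d0 C (D.X 1) g s hs, twist_d0 D (C.X 1) 0 0 hz]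
      apply ModuleCat.hom_ext; apply LinearMap.ext; rintro ⟨x, y⟩
      show D.d 1 0 (f.f 1 x + y) + (0 : ↑(C.X 1) →ₗ[R] ↑(D.X 0)) x
          = f.f 0 (C.d 1 0 x + g y)
      rw [LinearMap.zero_apply, add_zero, map_add, map_add, fcomm C D f 1 0, hg]
    | 1 =>
      rw [twist_d1 C (D.X 1) g s hs, twist_d1 D (C.X 1) 0 0 hz]
      apply ModuleCat.hom_ext; apply LinearMap.ext; rintro ⟨x, y⟩
      show ((D.d 2 1 (f.f 2 x + p y) + (0 : ↑(C.X 1) →ₗ[R] ↑(D.X 1)) (C.d 2 1 x + s y),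
          C.d 2 1 x + s y) : ↑(D.X 1) × ↑(C.X 1))
          = (f.f 1 (C.d 2 1 x + s y) + y, C.d 2 1 x + s y)
      rw [LinearMap.zero_apply, add_zero, map_add, map_add, fcomm C D f 2 1, hp]
      rw [add_assoc]
    | 2 =>
      rw [twist_d2 C (D.X 1) g s hs, twist_d2 D (C.X 1) 0 0 hz]
      apply ModuleCat.hom_ext; apply LinearMap.ext; intro x
      show ((D.d 3 2 (f.f 3 x), (0 : ↑(C.X 1))) : ↑(D.X 2) × ↑(C.X 1))
          = (f.f 2 (C.d 3 2 x) + p 0, C.d 2 1 (C.d 3 2 x) + s 0)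
      rw [map_zero p, map_zero s, add_zero, add_zero]
      erw [fcomm C D f 3 2, dd C 3 2 1]
    | (n+3) =>
      rw [twist_d3 C (D.X 1) g s hs, twist_d3 D (C.X 1) 0 0 hz]
      apply ModuleCat.hom_ext; apply LinearMap.ext; intro x
      show D.d (n+4) (n+3) (f.f (n+4) x) = f.f (n+3) (C.d (n+4) (n+3) x)
      exact fcomm C D f (n+4) (n+3) x

def alignHomotopy : Homotopy
    (twistIncl C (D.X 1) g s hs ≫ twistMap C D f g s hs hg p hp hz)
    (f ≫ twistIncl D (C.X 1) 0 0 hz) where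
  hom i j := match i, j with
    | 1, 2 => ModuleCat.ofHom (LinearMap.prod 0 LinearMap.id :
        ↑(C.X 1) →ₗ[R] ↑(D.X 2) × ↑(C.X 1))
    | 0, _ => 0
    | 1, _ => 0
    | (_+2), _ => 0
  zero i j hij := by
    match i, j with
    | 1, 2 => exact absurd rfl hij
    | 0, j => rfl
    | 1, 0 => rfl
    | 1, 1 => rfl
    | 1, (k+3) => rfl
    | (i+2), j => rfl
  comm i := by
    match i with
    | 0 =>
      rw [dNext_eq_zero _ 0 (by rw [ChainComplex.next_nat_zero]; simp),
        prevD_eq _ (show (ComplexShape.down ℕ).Rel (0+1) 0 from rfl)]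
      apply ModuleCat.hom_ext; apply LinearMap.ext; intro x
      show f.f 0 x = 0 + (D.d 1 0 0 + (0 : ↑(C.X 1) →ₗ[R] ↑(D.X 0)) 0) + f.f 0 x
      rw [map_zero (ConcreteCategory.hom (D.d 1 0)), LinearMap.zero_apply]
      simp
    | 1 =>
      rw [dNext_eq _ (show (ComplexShape.down ℕ).Rel 1 0 from rfl),
        prevD_eq _ (show (ComplexShape.down ℕ).Rel (1+1) 1 from rfl),
        twist_d1 D (C.X 1) 0 0 hz]
      apply ModuleCat.hom_ext; apply LinearMap.ext; intro x
      show ((f.f 1 x + 0, x) : ↑(D.X 1) × ↑(C.X 1))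
          = 0 + (D.d 2 1 0 + (0 : ↑(C.X 1) →ₗ[R] ↑(D.X 1)) x, x) + (f.f 1 x, 0)
      rw [map_zero (ConcreteCategory.hom (D.d 2 1)), LinearMap.zero_apply]
      refine Prod.ext ?_ ?_ <;> simp
    | 2 =>
      rw [dNext_eq _ (show (ComplexShape.down ℕ).Rel 2 1 from rfl),
        prevD_eq _ (show (ComplexShape.down ℕ).Rel (2+1) 2 from rfl),
        twist_d2 D (C.X 1) 0 0 hz]
      apply ModuleCat.hom_ext; apply LinearMap.ext; intro x
      show ((f.f 2 x + p 0, C.d 2 1 x + s 0) : ↑(D.X 2) × ↑(C.X 1))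
          = ((0 : ↑(D.X 2)), C.d 2 1 x) + (D.d 3 2 0, (0 : ↑(C.X 1))) + (f.f 2 x, 0)
      rw [map_zero p, map_zero s, map_zero (ConcreteCategory.hom (D.d 3 2))]
      refine Prod.ext ?_ ?_ <;> simp
    | 3 =>
      rw [dNext_eq _ (show (ComplexShape.down ℕ).Rel 3 2 from rfl),
        prevD_eq _ (show (ComplexShape.down ℕ).Rel (3+1) 3 from rfl)]
      apply ModuleCat.hom_ext; apply LinearMap.ext; intro x
      show f.f 3 x = 0 + D.d 4 3 0 + f.f 3 x
      rw [map_zero (ConcreteCategory.hom (D.d 4 3))]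
      simp
    | (n+4) =>
      rw [dNext_eq _ (show (ComplexShape.down ℕ).Rel (n+4) (n+3) from rfl),
        prevD_eq _ (show (ComplexShape.down ℕ).Rel (n+4+1) (n+4) from rfl)]
      rw [twist_d4 D (C.X 1) 0 0 hz n]
      apply ModuleCat.hom_ext; apply LinearMap.ext; intro x
      show f.f (n+4) x = 0 + D.d (n+5) (n+4) 0 + f.f (n+4) x
      rw [map_zero (ConcreteCategory.hom (D.d (n+5) (n+4)))]
      simp

end TwistMap

end Stmt8

open Stmt8

/-- Algebraic 1-skeleton alignment (with simple equivalence weakened to chain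
homotopy equivalence): given `f₀` an isomorphism, `H₀(f)` bijective, `H₁(f)`
surjective, there are complexes `C'`, `D'` agreeing with `C`, `D` in degree 0 and
degrees `≥ 3`, chain homotopy equivalences `a`, `b` which are isomorphisms in
degree 0 and identities in degrees `≥ 3`, and `f' : C' → D'` with `f'₀`, `f'₁`
isomorphisms, such that `f' ∘ a` is chain homotopic to `b ∘ f`. -/
theorem statement8 {R : Type*} [Ring R]
    (C D : ChainComplex (ModuleCat R) ℕ) (f : C ⟶ D)
    (hCfree : ∀ n, Module.Free R (C.X n)) (hCfin : ∀ n, Module.Finite R (C.X n))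
    (hDfree : ∀ n, Module.Free R (D.X n)) (hDfin : ∀ n, Module.Finite R (D.X n))
    (hf0 : IsIso (f.f 0))
    (h0 : Function.Bijective (HomologicalComplex.homologyMap f 0))
    (h1 : Function.Surjective (HomologicalComplex.homologyMap f 1)) :
    ∃ (C' D' : ChainComplex (ModuleCat R) ℕ)
      (_ : ∀ n, Module.Free R (C'.X n)) (_ : ∀ n, Module.Finite R (C'.X n))
      (_ : ∀ n, Module.Free R (D'.X n)) (_ : ∀ n, Module.Finite R (D'.X n))
      (_ : C'.X 0 = C.X 0) (hCX : ∀ n, 3 ≤ n → C'.X n = C.X n)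
      (_ : D'.X 0 = D.X 0) (hDX : ∀ n, 3 ≤ n → D'.X n = D.X n)
      (a : HomotopyEquiv C C') (b : HomotopyEquiv D D') (f' : C' ⟶ D'),
      IsIso (a.hom.f 0) ∧
      (∀ n (hn : 3 ≤ n), a.hom.f n = eqToHom (hCX n hn).symm) ∧
      IsIso (b.hom.f 0) ∧
      (∀ n (hn : 3 ≤ n), b.hom.f n = eqToHom (hDX n hn).symm) ∧
      IsIso (f'.f 0) ∧ IsIso (f'.f 1) ∧
      Nonempty (Homotopy (a.hom ≫ f') (f ≫ b.hom)) := by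
  classical
  haveI := hCfree 1; haveI := hCfree 2; haveI := hDfree 1; haveI := hDfree 2
  haveI := hf0
  -- inverse of f.f 0
  set finv : ↑(D.X 0) →ₗ[R] ↑(C.X 0) := (inv (f.f 0) : D.X 0 ⟶ C.X 0).hom with hfinvdef
  have hfinv : ∀ x, f.f 0 (finv x) = x := by
    intro x
    have h := elem (IsIso.inv_hom_id (f.f 0)) x
    rw [comp_elem] at h
    exact h
  set gC : ↑(D.X 1) →ₗ[R] ↑(C.X 0) :=
    finv.comp (D.d 1 0).hom with hgCdef
  have hgC : ∀ y, f.f 0 (gC y) = D.d 1 0 y := fun y => hfinv (D.d 1 0 y)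
  -- concrete consequences of h0, h1
  have FactA : ∀ (x : C.X 0) (u : D.X 1), D.d 1 0 u = f.f 0 x → ∃ w, C.d 1 0 w = x := by
    intro x u hu
    refine keyInj C D f 1 0 0 (ChainComplex.prev ℕ 0) ChainComplex.next_nat_zero h0.1 x ?_ u hu
    rw [HomologicalComplex.shape C 0 0 (by simp)]
    rfl
  have FactB : ∀ y : D.X 1, D.d 1 0 y = 0 →
      ∃ x, C.d 1 0 x = 0 ∧ ∃ u, D.d 2 1 u = f.f 1 x - y := fun y hy =>
    keySurj C D f 2 1 0 (ChainComplex.prev ℕ 1) (ChainComplex.next_nat_succ 0) h1 y hy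
  -- construct s₀
  have hA : ∀ y : D.X 1, -(gC y) ∈ LinearMap.range (C.d 1 0).hom := by
    intro y
    obtain ⟨w, hw⟩ := FactA (-(gC y)) (-y) (by rw [map_neg, map_neg, hgC])
    exact ⟨w, hw⟩
  obtain ⟨s₀, hs₀⟩ := Module.projective_lifting_property
    (LinearMap.rangeRestrict (C.d 1 0).hom)
    (LinearMap.codRestrict _ (-gC) (by intro y; simpa using hA y))
    (LinearMap.surjective_rangeRestrict _)
  have hs₀' : ∀ y, C.d 1 0 (s₀ y) = -(gC y) := by
    intro y
    have h := congrArg Subtype.val (LinearMap.congr_fun hs₀ y)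
    simpa using h
  -- the cycle quotient
  set KD := LinearMap.ker (D.d 1 0).hom with hKDdef
  set KC := LinearMap.ker (C.d 1 0).hom with hKCdef
  set Bsub : Submodule R ↥KD :=
    Submodule.comap KD.subtype (LinearMap.range (D.d 2 1).hom) with hBdef
  have hker : ∀ x : ↥KC, ((f.f 1).hom.comp KC.subtype) x ∈ KD := by
    rintro ⟨x, hx⟩
    have hx' : C.d 1 0 x = 0 := hx
    show D.d 1 0 (f.f 1 x) = 0
    rw [fcomm C D f 1 0, hx', map_zero]
  set θ : ↥KC →ₗ[R] ↥KD ⧸ Bsub :=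
    Bsub.mkQ.comp (LinearMap.codRestrict KD ((f.f 1).hom.comp KC.subtype) hker)
    with hθdef
  have hθsurj : Function.Surjective θ := by
    intro q
    obtain ⟨z, rfl⟩ := Submodule.Quotient.mk_surjective Bsub q
    obtain ⟨x, hx, u, hu⟩ := FactB z.1 z.2
    refine ⟨⟨x, hx⟩, ?_⟩
    show Submodule.Quotient.mk _ = Submodule.Quotient.mk z
    rw [Submodule.Quotient.eq]
    show (⟨f.f 1 x, _⟩ - z : ↥KD).1 ∈ LinearMap.range (D.d 2 1).hom
    exact ⟨u, by rw [hu]; rfl⟩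
  have hker2 : ∀ y : D.X 1,
      (((f.f 1).hom.comp s₀ + (LinearMap.id : ↑(D.X 1) →ₗ[R] ↑(D.X 1))) : ↑(D.X 1) →ₗ[R] ↑(D.X 1)) y ∈ KD := by
    intro y
    show D.d 1 0 (f.f 1 (s₀ y) + y) = 0
    rw [map_add, fcomm C D f 1 0, hs₀', map_neg, hgC]
    simp
  set τ : ↑(D.X 1) →ₗ[R] ↥KD ⧸ Bsub :=
    Bsub.mkQ.comp (LinearMap.codRestrict KD
      (((f.f 1).hom.comp s₀ + (LinearMap.id : ↑(D.X 1) →ₗ[R] ↑(D.X 1)))) hker2) with hτdef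
  obtain ⟨w, hwθ⟩ := Module.projective_lifting_property θ τ hθsurj
  set s : ↑(D.X 1) →ₗ[R] ↑(C.X 1) := s₀ - KC.subtype.comp w with hsdef
  have hs : ∀ y, C.d 1 0 (s y) = -(gC y) := by
    intro y
    have hw0 : C.d 1 0 ((w y : ↥KC) : C.X 1) = 0 := (w y).2
    show C.d 1 0 (s₀ y - (w y : ↥KC).1) = -(gC y)
    rw [map_sub, hs₀', hw0, sub_zero]
  have hrange : ∀ y, f.f 1 (s y) + y ∈
      LinearMap.range (D.d 2 1).hom := by
    intro y
    have h := LinearMap.congr_fun hwθ y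
    have h2 : (θ (w y) : ↥KD ⧸ Bsub) = τ y := h
    rw [hθdef, hτdef] at h2
    have h3 : Submodule.Quotient.mk (p := Bsub)
        ⟨f.f 1 ((w y : ↥KC) : C.X 1), hker (w y)⟩ =
        Submodule.Quotient.mk ⟨f.f 1 (s₀ y) + y, hker2 y⟩ := h2
    rw [Submodule.Quotient.eq] at h3
    obtain ⟨u, hu⟩ := Submodule.mem_comap.mp h3
    have hu' : D.d 2 1 u = f.f 1 ((w y : ↥KC) : C.X 1) - (f.f 1 (s₀ y) + y) := by
      rw [hu]
      rfl
    refine ⟨-u, ?_⟩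
    rw [map_neg, hu']
    show -(f.f 1 ((w y : ↥KC) : C.X 1) - (f.f 1 (s₀ y) + y)) = f.f 1 (s₀ y - (w y : ↥KC).1) + y
    rw [map_sub]
    abel
  obtain ⟨p, hp₀⟩ := Module.projective_lifting_property
    (LinearMap.rangeRestrict (D.d 2 1).hom)
    (LinearMap.codRestrict _ (((f.f 1).hom.comp s + (LinearMap.id : ↑(D.X 1) →ₗ[R] ↑(D.X 1))))
      (fun y => hrange y))
    (LinearMap.surjective_rangeRestrict _)
  have hp : ∀ y, D.d 2 1 (p y) = f.f 1 (s y) + y := by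
    intro y
    have h := congrArg Subtype.val (LinearMap.congr_fun hp₀ y)
    simpa using h
  have hz : ∀ y : ↑(C.X 1), D.d 1 0 ((0 : ↑(C.X 1) →ₗ[R] ↑(D.X 1)) y)
      = - (0 : ↑(C.X 1) →ₗ[R] ↑(D.X 0)) y := by intro y; simp
  refine ⟨twist C (D.X 1) gC s hs, twist D (C.X 1) 0 0 hz,
    ?_, ?_, ?_, ?_, rfl,
    (fun n hn => by obtain ⟨m, rfl⟩ : ∃ m, n = m + 3 := ⟨n - 3, by omega⟩; rfl), rfl,
    (fun n hn => by obtain ⟨m, rfl⟩ : ∃ m, n = m + 3 := ⟨n - 3, by omega⟩; rfl),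
    twistEquiv C (D.X 1) gC s hs, twistEquiv D (C.X 1) 0 0 hz,
    twistMap C D f gC s hs hgC p hp hz,
    ?_, ?_, ?_, ?_, ?_, ?_, ⟨alignHomotopy C D f gC s hs hgC p hp hz⟩⟩
  · intro n
    match n with
    | 0 => exact hCfree 0
    | 1 => exact inferInstanceAs (Module.Free R (↑(C.X 1) × ↑(D.X 1)))
    | 2 => exact inferInstanceAs (Module.Free R (↑(C.X 2) × ↑(D.X 1)))
    | (m+3) => exact hCfree (m+3)
  · intro n
    haveI := hCfin 1; haveI := hCfin 2; haveI := hDfin 1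
    match n with
    | 0 => exact hCfin 0
    | 1 => exact inferInstanceAs (Module.Finite R (↑(C.X 1) × ↑(D.X 1)))
    | 2 => exact inferInstanceAs (Module.Finite R (↑(C.X 2) × ↑(D.X 1)))
    | (m+3) => exact hCfin (m+3)
  · intro n
    match n with
    | 0 => exact hDfree 0
    | 1 => exact inferInstanceAs (Module.Free R (↑(D.X 1) × ↑(C.X 1)))
    | 2 => exact inferInstanceAs (Module.Free R (↑(D.X 2) × ↑(C.X 1)))
    | (m+3) => exact hDfree (m+3)
  · intro n
    haveI := hDfin 1; haveI := hDfin 2; haveI := hCfin 1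
    match n with
    | 0 => exact hDfin 0
    | 1 => exact inferInstanceAs (Module.Finite R (↑(D.X 1) × ↑(C.X 1)))
    | 2 => exact inferInstanceAs (Module.Finite R (↑(D.X 2) × ↑(C.X 1)))
    | (m+3) => exact hDfin (m+3)
  · exact inferInstanceAs (IsIso (𝟙 (C.X 0)))
  · intro n hn
    obtain ⟨m, rfl⟩ : ∃ m, n = m + 3 := ⟨n - 3, by omega⟩
    rfl
  · exact inferInstanceAs (IsIso (𝟙 (D.X 0)))
  · intro n hn
    obtain ⟨m, rfl⟩ : ∃ m, n = m + 3 := ⟨n - 3, by omega⟩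
    rfl
  · exact hf0
  · refine ⟨⟨ModuleCat.ofHom (LinearMap.prod (LinearMap.snd R (D.X 1) (C.X 1))
      (LinearMap.fst R (D.X 1) (C.X 1)
        - (f.f 1).hom.comp (LinearMap.snd R (D.X 1) (C.X 1))) :
      ↑(D.X 1) × ↑(C.X 1) →ₗ[R] ↑(C.X 1) × ↑(D.X 1)), ?_, ?_⟩⟩
    · apply ModuleCat.hom_ext; apply LinearMap.ext; rintro ⟨x, y⟩
      show ((x, f.f 1 x + y - f.f 1 x) : ↑(C.X 1) × ↑(D.X 1)) = (x, y)
      rw [add_sub_cancel_left]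
    · apply ModuleCat.hom_ext; apply LinearMap.ext; rintro ⟨u, v⟩
      show ((f.f 1 v + (u - f.f 1 v), v) : ↑(D.X 1) × ↑(C.X 1)) = (u, v)
      refine Prod.ext ?_ rfl
      show f.f 1 v + (u - f.f 1 v) = u
      abel
end

section
/- Let R be a ring and let f : D → C be a chain map of nonnegatively graded chain complexes of R-modules such that D_n = 0 for all n ≥ 3 and the components f_0 and f_1 are isomorphisms. Then there exist a nonnegatively graded chain complex C' with C'_n = C_n for all n ∉ {2, 3}, with C'_2 isomorphic to C_2 ⊕ D_2 and C'_3 isomorphic to C_3 ⊕ D_2, a chain homotopy equivalence e : C → C' equal to the identity in all degrees n ∉ {2, 3}, and a chain map F : D → C' chain homotopic to e ∘ f, such that F_0 and F_1 are isomorphisms and F_2 : D_2 → C'_2 is a split monomorphism onto a direct summand of C'_2. -/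
open CategoryTheory

namespace Stab10

universe u v
variable {R : Type u} [Ring R] (C D : ChainComplex (ModuleCat.{v} R) ℕ)

lemma dd (i j k : ℕ) (x : C.X i) : C.d j k (C.d i j x) = 0 := by
  have h : C.d i j ≫ C.d j k = (0 : C.X i ⟶ C.X k) := C.d_comp_d i j k
  exact congrArg (fun g => g.hom x) h

/-- The modules of the stabilized complex. -/
def X' : ℕ → ModuleCat R
  | 2 => ModuleCat.of R ((C.X 2) × (D.X 2))
  | 3 => ModuleCat.of R ((C.X 3) × (D.X 2))
  | n => C.X n

/-- The differential of the stabilized complex. -/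
def d' : ∀ n, X' C D (n + 1) ⟶ X' C D n
  | 0 => C.d 1 0
  | 1 => ModuleCat.ofHom ((C.d 2 1).hom.comp (LinearMap.fst R (C.X 2) (D.X 2)))
  | 2 => ModuleCat.ofHom (LinearMap.prod ((C.d 3 2).hom.comp (LinearMap.fst R (C.X 3) (D.X 2)))
      (LinearMap.snd R (C.X 3) (D.X 2)))
  | 3 => ModuleCat.ofHom ((LinearMap.inl R (C.X 3) (D.X 2)).comp (C.d 4 3).hom)
  | (n+4) => C.d (n+5) (n+4)

lemma sq : ∀ n, d' C D (n + 1) ≫ d' C D n = 0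
  | 0 => by ext x; exact dd C 2 1 0 x.1
  | 1 => by ext x; exact dd C 3 2 1 x.1
  | 2 => by ext x; exact Prod.ext (dd C 4 3 2 x) rfl
  | 3 => by ext x; exact Prod.ext (dd C 5 4 3 x) rfl
  | (n+4) => by ext x; exact dd C (n+6) (n+5) (n+4) x

/-- The stabilized complex. -/
def C' : ChainComplex (ModuleCat R) ℕ := ChainComplex.of (X' C D) (d' C D) (sq C D)

/-- Components of the map `C ⟶ C'`. -/
def ef : ∀ n, C.X n ⟶ X' C D n
  | 0 => 𝟙 _
  | 1 => 𝟙 _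
  | 2 => ModuleCat.ofHom (LinearMap.inl R (C.X 2) (D.X 2))
  | 3 => ModuleCat.ofHom (LinearMap.inl R (C.X 3) (D.X 2))
  | (n+4) => 𝟙 (C.X (n+4))

/-- Components of the map `C' ⟶ C`. -/
def pf : ∀ n, X' C D n ⟶ C.X n
  | 0 => 𝟙 _
  | 1 => 𝟙 _
  | 2 => ModuleCat.ofHom (LinearMap.fst R (C.X 2) (D.X 2))
  | 3 => ModuleCat.ofHom (LinearMap.fst R (C.X 3) (D.X 2))
  | (n+4) => 𝟙 (C.X (n+4))

/-- The map `C ⟶ C'`. -/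
def ehom : C ⟶ C' C D where
  f := ef C D
  comm' := by
    rintro i j (rfl : j + 1 = i)
    rw [show (C' C D).d (j+1) j = d' C D j from ChainComplex.of_d _ _ _]
    match j with
    | 0 => rfl
    | 1 => rfl
    | 2 => rfl
    | 3 => rfl
    | (n+4) => rfl

/-- The map `C' ⟶ C`. -/
def phom : C' C D ⟶ C where
  f := pf C D
  comm' := by
    rintro i j (rfl : j + 1 = i)
    rw [show (C' C D).d (j+1) j = d' C D j from ChainComplex.of_d _ _ _]
    match j with
    | 0 => rfl
    | 1 => rfl
    | 2 => rfl
    | 3 => rfl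
    | (n+4) => rfl

lemma e_comp_p : ehom C D ≫ phom C D = 𝟙 C := by
  ext n x
  match n with
  | 0 => rfl
  | 1 => rfl
  | 2 => rfl
  | 3 => rfl
  | (n+4) => rfl


/-- Degree-raising map giving the contraction. -/
def s23 : (C' C D).X 2 ⟶ (C' C D).X 3 :=
  ModuleCat.ofHom ((LinearMap.inr R (C.X 3) (D.X 2)).comp (LinearMap.snd R (C.X 2) (D.X 2)))

lemma ofd (j : ℕ) : (C' C D).d (j + 1) j = d' C D j := ChainComplex.of_d _ _ _

lemma relnat (j : ℕ) : (ComplexShape.down ℕ).Rel (j + 1) j := rfl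

/-- The homotopy witnessing that `p ≫ e` is homotopic to the identity. -/
def h1 : Homotopy (𝟙 (C' C D)) (phom C D ≫ ehom C D) where
  hom i j :=
    if h : i = 2 ∧ j = 3 then
      eqToHom (congrArg (C' C D).X h.1) ≫ s23 C D ≫
        eqToHom (congrArg (C' C D).X h.2).symm else 0
  zero i j hij := by
    rw [dif_neg]
    rintro ⟨rfl, rfl⟩
    exact hij rfl
  comm i := by
    match i with
    | 0 =>
      rw [dNext_eq_zero _ 0 (by simp), prevD_eq _ (relnat 0)]
      rw [dif_neg (by omega)]
      simp only [Limits.zero_comp, Limits.comp_zero, zero_add, add_zero]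
      ext x; rfl
    | 1 =>
      rw [dNext_eq _ (relnat 0), prevD_eq _ (relnat 1)]
      rw [dif_neg (by omega), dif_neg (by omega)]
      simp only [Limits.zero_comp, Limits.comp_zero, zero_add, add_zero]
      ext x; rfl
    | 2 =>
      rw [dNext_eq _ (relnat 1), prevD_eq _ (relnat 2)]
      rw [dif_neg (by omega), dif_pos ⟨rfl, rfl⟩, eqToHom_refl, eqToHom_refl,
        Category.id_comp, Category.comp_id, ofd C D 2]
      simp only [Limits.zero_comp, Limits.comp_zero, zero_add, add_zero]
      ext x
      refine Prod.ext ?_ ?_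
      · show x.1 = C.d 3 2 0 + x.1
        rw [map_zero, zero_add]
      · show x.2 = x.2 + 0
        rw [add_zero]
    | 3 =>
      rw [dNext_eq _ (relnat 2), prevD_eq _ (relnat 3)]
      rw [dif_pos ⟨rfl, rfl⟩, dif_neg (by omega), eqToHom_refl, eqToHom_refl,
        Category.id_comp, Category.comp_id, ofd C D 2]
      simp only [Limits.zero_comp, Limits.comp_zero, zero_add, add_zero]
      ext x
      refine Prod.ext ?_ ?_
      · show x.1 = 0 + x.1
        rw [zero_add]
      · show x.2 = x.2 + 0
        rw [add_zero]
    | (n+4) =>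
      rw [dNext_eq _ (relnat (n+3)), prevD_eq _ (relnat (n+4))]
      rw [dif_neg (by omega), dif_neg (by omega)]
      simp only [Limits.zero_comp, Limits.comp_zero, zero_add, add_zero]
      ext x; rfl

/-- The stabilization homotopy equivalence. -/
def e : HomotopyEquiv C (C' C D) where
  hom := ehom C D
  inv := phom C D
  homotopyHomInvId := Homotopy.ofEq (e_comp_p C D)
  homotopyInvHomId := (h1 C D).symm

variable (f : D ⟶ C)

/-- Components of the stabilized chain map. -/
def Ff : ∀ n, D.X n ⟶ X' C D n
  | 2 => ModuleCat.ofHom (LinearMap.prod (f.f 2).hom LinearMap.id)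
  | n => f.f n ≫ ef C D n

variable (hD : ∀ n, 3 ≤ n → Limits.IsZero (D.X n))

/-- The stabilized chain map. -/
def F : D ⟶ C' C D where
  f := Ff C D f
  comm' := by
    rintro i j (rfl : j + 1 = i)
    rw [ofd]
    match j with
    | 0 => ext x; exact congrArg (fun g => g.hom x) (f.comm 1 0)
    | 1 => ext x; exact congrArg (fun g => g.hom x) (f.comm 2 1)
    | (k+2) => exact (hD (k+3) (by omega)).eq_of_src _ _

def inr3 : D.X 2 ⟶ (C' C D).X 3 := ModuleCat.ofHom (LinearMap.inr R (C.X 3) (D.X 2))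

/-- The homotopy `F ≃ f ≫ e`. -/
def hF : Homotopy (F C D f hD) (f ≫ ehom C D) where
  hom i j :=
    if h : i = 2 ∧ j = 3 then
      eqToHom (congrArg D.X h.1) ≫
        (inr3 C D ≫
          eqToHom (congrArg (C' C D).X h.2).symm)
    else 0
  zero i j hij := by
    rw [dif_neg]
    rintro ⟨rfl, rfl⟩
    exact hij rfl
  comm i := by
    match i with
    | 0 =>
      rw [dNext_eq_zero _ 0 (by simp), prevD_eq _ (relnat 0)]
      rw [dif_neg (by omega)]
      simp only [Limits.zero_comp, Limits.comp_zero, zero_add, add_zero]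
      ext x; rfl
    | 1 =>
      rw [dNext_eq _ (relnat 0), prevD_eq _ (relnat 1)]
      rw [dif_neg (by omega), dif_neg (by omega)]
      simp only [Limits.zero_comp, Limits.comp_zero, zero_add, add_zero]
      ext x; rfl
    | 2 =>
      rw [dNext_eq _ (relnat 1), prevD_eq _ (relnat 2)]
      rw [dif_neg (by omega), dif_pos ⟨rfl, rfl⟩, eqToHom_refl, eqToHom_refl,
        Category.id_comp, Category.comp_id, ofd C D 2]
      simp only [Limits.zero_comp, Limits.comp_zero, zero_add, add_zero]
      ext x
      refine Prod.ext ?_ ?_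
      · show f.f 2 x = C.d 3 2 0 + f.f 2 x
        rw [map_zero, zero_add]
      · show x = x + 0
        rw [add_zero]
    | (k+3) => exact (hD (k+3) (by omega)).eq_of_src _ _

lemma hX : ∀ n, n ≠ 2 → n ≠ 3 → (C' C D).X n = C.X n
  | 0, _, _ => rfl
  | 1, _, _ => rfl
  | 2, h, _ => absurd rfl h
  | 3, _, h => absurd rfl h
  | (_+4), _, _ => rfl

lemma ef_eq : ∀ n (h2 : n ≠ 2) (h3 : n ≠ 3),
    (ehom C D).f n = eqToHom (hX C D n h2 h3).symm
  | 0, _, _ => rfl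
  | 1, _, _ => rfl
  | 2, h, _ => absurd rfl h
  | 3, _, h => absurd rfl h
  | (_+4), _, _ => rfl

end Stab10

open Stab10 in
/-- Stabilization claim in the proof of the realization theorem: given `f : D → C`
with `D` concentrated in degrees `≤ 2` and `f₀`, `f₁` isomorphisms, there is a
complex `C'` equal to `C` outside degrees 2, 3, with `C'₂ ≅ C₂ ⊕ D₂` and
`C'₃ ≅ C₃ ⊕ D₂`, a chain homotopy equivalence `e : C → C'` which is the identity
outside degrees 2, 3, and a chain map `F : D → C'` chain homotopic to `e ∘ f` with
`F₀`, `F₁` isomorphisms and `F₂` a split monomorphism onto a direct summand. -/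
theorem statement10 {R : Type*} [Ring R]
    (C D : ChainComplex (ModuleCat R) ℕ) (f : D ⟶ C)
    (hD : ∀ n, 3 ≤ n → Limits.IsZero (D.X n))
    (h0 : IsIso (f.f 0)) (h1 : IsIso (f.f 1)) :
    ∃ (C' : ChainComplex (ModuleCat R) ℕ)
      (hX : ∀ n, n ≠ 2 → n ≠ 3 → C'.X n = C.X n),
      Nonempty ((C'.X 2) ≃ₗ[R] ((C.X 2) × (D.X 2))) ∧
      Nonempty ((C'.X 3) ≃ₗ[R] ((C.X 3) × (D.X 2))) ∧
      ∃ (e : HomotopyEquiv C C') (F : D ⟶ C'),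
        (∀ n (h2 : n ≠ 2) (h3 : n ≠ 3), e.hom.f n = eqToHom (hX n h2 h3).symm) ∧
        Nonempty (Homotopy F (f ≫ e.hom)) ∧
        IsIso (F.f 0) ∧ IsIso (F.f 1) ∧
        ∃ r : C'.X 2 ⟶ D.X 2, F.f 2 ≫ r = 𝟙 (D.X 2) := by
  refine ⟨C' C D, hX C D, ⟨LinearEquiv.refl R _⟩, ⟨LinearEquiv.refl R _⟩,
    e C D, F C D f hD, ef_eq C D, ⟨hF C D f hD⟩, ?_, ?_,
    (ModuleCat.ofHom (LinearMap.snd R (C.X 2) (D.X 2)) : (C' C D).X 2 ⟶ D.X 2), ?_⟩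
  · exact ⟨(inv (f.f 0) : C.X 0 ⟶ D.X 0), IsIso.hom_inv_id (f.f 0), IsIso.inv_hom_id (f.f 0)⟩
  · exact ⟨(inv (f.f 1) : C.X 1 ⟶ D.X 1), IsIso.hom_inv_id (f.f 1), IsIso.inv_hom_id (f.f 1)⟩
  · ext x; rfl
end

section
/- Let R be a ring and let f : C → D be a chain homotopy equivalence between chain complexes of R-modules concentrated in degrees 0, 1, 2 (i.e. C_n = D_n = 0 for n ≥ 3). If the components f_0 : C_0 → D_0 and f_1 : C_1 → D_1 are isomorphisms, then f_2 : C_2 → D_2 is also an isomorphism. -/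
open CategoryTheory

/-- A chain homotopy equivalence of complexes concentrated in degrees 0, 1, 2 which
is an isomorphism in degrees 0 and 1 is also an isomorphism in degree 2. -/
theorem statement11 {R : Type*} [Ring R]
    (C D : ChainComplex (ModuleCat R) ℕ)
    (hC : ∀ n, 3 ≤ n → Limits.IsZero (C.X n))
    (hD : ∀ n, 3 ≤ n → Limits.IsZero (D.X n))
    (e : HomotopyEquiv C D)
    (h0 : IsIso (e.hom.f 0)) (h1 : IsIso (e.hom.f 1)) :
    IsIso (e.hom.f 2) := by
  classical
  set F := e.hom with hF
  set G := e.inv with hG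
  have H : Homotopy (F ≫ G) (𝟙 C) := e.homotopyHomInvId
  have H' : Homotopy (G ≫ F) (𝟙 D) := e.homotopyInvHomId
  have rel21 : (ComplexShape.down ℕ).Rel 2 1 := by simp [ComplexShape.down_Rel]
  have rel10 : (ComplexShape.down ℕ).Rel 1 0 := by simp [ComplexShape.down_Rel]
  have hprev2 : (ComplexShape.down ℕ).prev 2 = 3 := ChainComplex.prev ℕ 2
  -- degree 2 homotopy identity for C : G₂ ∘ F₂ = id + H₁₂ ∘ d
  have hcomm2C : (F ≫ G).f 2 = C.d 2 1 ≫ H.hom 1 2 + HomologicalComplex.Hom.f (𝟙 C) 2 := by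
    have h := H.comm 2
    rw [dNext_eq H.hom rel21] at h
    have hprev : prevD 2 H.hom = 0 := by
      rw [prevD, AddMonoidHom.mk'_apply, hprev2,
        (hC 3 le_rfl).eq_zero_of_tgt (H.hom 2 3), Limits.zero_comp]
    rw [hprev, add_zero] at h
    exact h
  -- degree 2 homotopy identity for D : F₂ ∘ G₂ = id + H'₁₂ ∘ d
  have hcomm2D : (G ≫ F).f 2 = D.d 2 1 ≫ H'.hom 1 2 + HomologicalComplex.Hom.f (𝟙 D) 2 := by
    have h := H'.comm 2
    rw [dNext_eq H'.hom rel21] at h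
    have hprev : prevD 2 H'.hom = 0 := by
      rw [prevD, AddMonoidHom.mk'_apply, hprev2,
        (hD 3 le_rfl).eq_zero_of_tgt (H'.hom 2 3), Limits.zero_comp]
    rw [hprev, add_zero] at h
    exact h
  -- degree 1 homotopy identity for C
  have hcomm1C : (F ≫ G).f 1 =
      C.d 1 0 ≫ H.hom 0 1 + H.hom 1 2 ≫ C.d 2 1 + HomologicalComplex.Hom.f (𝟙 C) 1 := by
    have h := H.comm 1
    rw [dNext_eq H.hom rel10, prevD_eq H.hom rel21] at h
    exact h
  -- elementwise versions
  have e2C : ∀ x : C.X 2, G.f 2 (F.f 2 x) = H.hom 1 2 (C.d 2 1 x) + x := by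
    intro x
    have := ConcreteCategory.congr_hom hcomm2C x
    simpa using this
  have e2D : ∀ y : D.X 2, F.f 2 (G.f 2 y) = H'.hom 1 2 (D.d 2 1 y) + y := by
    intro y
    have := ConcreteCategory.congr_hom hcomm2D y
    simpa using this
  have e1C : ∀ x : C.X 1,
      G.f 1 (F.f 1 x) = H.hom 0 1 (C.d 1 0 x) + C.d 2 1 (H.hom 1 2 x) + x := by
    intro x
    have := ConcreteCategory.congr_hom hcomm1C x
    simpa using this
  -- chain map identities, elementwise
  have cmF21 : ∀ x : C.X 2, D.d 2 1 (F.f 2 x) = F.f 1 (C.d 2 1 x) :=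
    fun x => ConcreteCategory.congr_hom (F.comm 2 1) x
  have cmF10 : ∀ x : C.X 1, D.d 1 0 (F.f 1 x) = F.f 0 (C.d 1 0 x) :=
    fun x => ConcreteCategory.congr_hom (F.comm 1 0) x
  have cmG21 : ∀ y : D.X 2, C.d 2 1 (G.f 2 y) = G.f 1 (D.d 2 1 y) :=
    fun y => ConcreteCategory.congr_hom (G.comm 2 1) y
  -- injectivity of F₀ and F₁, surjectivity of F₁
  have f0inj : Function.Injective (F.f 0) :=
    ((ConcreteCategory.isIso_iff_bijective (F.f 0)).1 h0).1
  have f1bij : Function.Bijective (F.f 1) :=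
    (ConcreteCategory.isIso_iff_bijective (F.f 1)).1 h1
  -- d² = 0, elementwise
  have dd20 : ∀ y : D.X 2, D.d 1 0 (D.d 2 1 y) = 0 := by
    intro y
    have h := ConcreteCategory.congr_hom (D.d_comp_d 2 1 0) y
    exact h
  rw [ConcreteCategory.isIso_iff_bijective]
  constructor
  · -- injectivity
    show Function.Injective (F.f 2)
    rw [injective_iff_map_eq_zero]
    intro x hx
    have hd : C.d 2 1 x = 0 := by
      apply f1bij.1
      rw [← cmF21 x, hx, map_zero, map_zero]
    have h := e2C x
    rw [hx, map_zero, hd, map_zero, zero_add] at h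
    exact h.symm
  · -- surjectivity
    show Function.Surjective (F.f 2)
    intro y
    -- x₁ := F₁⁻¹ (d y) is a cycle
    obtain ⟨x₁, hx₁⟩ := f1bij.2 (D.d 2 1 y)
    have hdx₁ : C.d 1 0 x₁ = 0 := by
      apply f0inj
      rw [← cmF10 x₁, hx₁, dd20, map_zero]
    -- x₁ is a boundary
    have hb : x₁ = C.d 2 1 (G.f 2 y - H.hom 1 2 x₁) := by
      have h₁ := e1C x₁
      rw [hdx₁, map_zero, zero_add] at h₁
      have h₂ : G.f 1 (F.f 1 x₁) = C.d 2 1 (G.f 2 y) := by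
        rw [hx₁, ← cmG21]
      rw [h₂] at h₁
      rw [map_sub, h₁]
      abel
    set x₂ : C.X 2 := G.f 2 y - H.hom 1 2 x₁ with hx₂
    -- z := y - F₂ x₂ is a cycle, hence z = F₂ (G₂ z)
    have hz : D.d 2 1 (y - F.f 2 x₂) = 0 := by
      rw [map_sub, cmF21, ← hb, hx₁, sub_self]
    have h := e2D (y - F.f 2 x₂)
    rw [hz, map_zero, zero_add] at h
    exact ⟨x₂ + G.f 2 (y - F.f 2 x₂), by rw [map_add, h]; abel⟩
end
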